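/- Let ℓ ≥ 1. There is a bijection Φ from the set of Temperley–Lieb patterns of {1, 2, …, 2ℓ+1} to the set of noncrossing partitions of {0, 1, …, ℓ} with the following property: if σ is a TL pattern whose blocks consisting of an odd element smaller than an even element are {2a_1+1, 2b_1}, …, {2a_d+1, 2b_d}, then the blocks of Φ(σ) not containing 0 are exactly the d sets [a_j+1, b_j] ∖ ⋃_{j' : [a_{j'}+1, b_{j'}] ⊊ [a_j+1, b_j]} [a_{j'}+1, b_{j'}] for 1 ≤ j ≤ d (intervals of integers), and the block of Φ(σ) containing 0 is the complement in {0, 1, …, ℓ} of the union of these d sets. -/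

import Mathlib

/-- `P` is a partition of the finite set `B ⊆ ℕ` into nonempty blocks. -/
def IsPartitionOf (B : Finset ℕ) (P : Finset (Finset ℕ)) : Prop :=
  (∀ L ∈ P, L.Nonempty) ∧ (∀ L ∈ P, L ⊆ B) ∧ ∀ b ∈ B, ∃! L, L ∈ P ∧ b ∈ L

/-- The noncrossing condition on the blocks. -/
def PairwiseNoncrossing (P : Finset (Finset ℕ)) : Prop :=
  ∀ L ∈ P, ∀ L' ∈ P, L ≠ L' →
    ∀ a ∈ L, ∀ b ∈ L, ∀ c ∈ L', ∀ d ∈ L', a ≤ b → c ≤ d →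
      Finset.Icc a b ∩ Finset.Icc c d = ∅ ∨
      Finset.Icc a b ⊆ Finset.Icc c d ∨ Finset.Icc c d ⊆ Finset.Icc a b

/-- A noncrossing partition (NCP) of the finite set `B ⊆ ℕ`. -/
def IsNCP (B : Finset ℕ) (P : Finset (Finset ℕ)) : Prop :=
  IsPartitionOf B P ∧ PairwiseNoncrossing P

/-- A Temperley–Lieb pattern of `Z`. -/
def IsTLPattern (Z : Finset ℕ) (σ : Finset (Finset ℕ)) : Prop :=
  IsPartitionOf Z σ ∧ PairwiseNoncrossing σ ∧
  ∃ M0 ∈ σ, ∃ d, Odd d ∧ M0 = ({d} : Finset ℕ) ∧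
    ∀ M ∈ σ, M ≠ M0 → ∃ a b, a < b ∧ M = ({a, b} : Finset ℕ) ∧ (b < d ∨ d < a)

/-- The pairs `(a, b)` such that `{2a+1, 2b}` is a block of `σ` whose odd element
`2a+1` is smaller than its even element `2b`. -/
def oddEvenPairs (ℓ : ℕ) (σ : Finset (Finset ℕ)) : Finset (ℕ × ℕ) :=
  ((Finset.Icc 0 ℓ) ×ˢ (Finset.Icc 0 ℓ)).filter
    (fun q => ({2 * q.1 + 1, 2 * q.2} : Finset ℕ) ∈ σ ∧ 2 * q.1 + 1 < 2 * q.2)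

/-- `carve ℓ σ (a, b) = [a+1, b] ∖ ⋃ {[a'+1, b'] : [a'+1, b'] ⊊ [a+1, b]}`, the union
over the pairs `(a', b')` of `σ` with odd element smaller than even element. -/
def carve (ℓ : ℕ) (σ : Finset (Finset ℕ)) (q : ℕ × ℕ) : Finset ℕ :=
  Finset.Icc (q.1 + 1) q.2 \
    (((oddEvenPairs ℓ σ).filter
        (fun q' => Finset.Icc (q'.1 + 1) q'.2 ⊂ Finset.Icc (q.1 + 1) q.2)).biUnion
      (fun q' => Finset.Icc (q'.1 + 1) q'.2))

open Finset

/-! ### Generic partition infrastructure -/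

noncomputable def blk (P : Finset (Finset ℕ)) (x : ℕ) : Finset ℕ :=
  if h : ∃ L, L ∈ P ∧ x ∈ L then h.choose else ∅

lemma blk_spec {P : Finset (Finset ℕ)} {x : ℕ} (h : ∃ L, L ∈ P ∧ x ∈ L) :
    blk P x ∈ P ∧ x ∈ blk P x := by
  rw [blk, dif_pos h]; exact h.choose_spec

lemma blk_eq {B : Finset ℕ} {P : Finset (Finset ℕ)} (hP : IsPartitionOf B P)
    {x : ℕ} {L : Finset ℕ} (hL : L ∈ P) (hx : x ∈ L) : blk P x = L := by
  have hxB : x ∈ B := hP.2.1 L hL hx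
  obtain ⟨M, hM, hun⟩ := hP.2.2 x hxB
  have h1 := blk_spec ⟨L, hL, hx⟩
  rw [hun _ h1, hun _ ⟨hL, hx⟩]

lemma blk_mem {B : Finset ℕ} {P : Finset (Finset ℕ)} (hP : IsPartitionOf B P)
    {x : ℕ} (hx : x ∈ B) : blk P x ∈ P ∧ x ∈ blk P x := by
  obtain ⟨M, ⟨hM, hxM⟩, _⟩ := hP.2.2 x hx
  exact blk_spec ⟨M, hM, hxM⟩

lemma block_unique {B : Finset ℕ} {P : Finset (Finset ℕ)} (hP : IsPartitionOf B P)
    {x : ℕ} {L L' : Finset ℕ} (hL : L ∈ P) (hL' : L' ∈ P) (hx : x ∈ L) (hx' : x ∈ L') :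
    L = L' := by
  rw [← blk_eq hP hL hx, ← blk_eq hP hL' hx']

/-! ### Interval helper lemmas -/

lemma icc_inter_empty {a b c d : ℕ} (h : b < c ∨ d < a) :
    Finset.Icc a b ∩ Finset.Icc c d = ∅ := by
  ext x; simp only [mem_inter, mem_Icc, notMem_empty, iff_false]; omega

lemma icc_inter_empty_iff {a b c d : ℕ} (hab : a ≤ b) (hcd : c ≤ d) :
    Finset.Icc a b ∩ Finset.Icc c d = ∅ ↔ b < c ∨ d < a := by
  constructor
  · intro h
    by_contra hc
    push_neg at hc
    have : max a c ∈ Finset.Icc a b ∩ Finset.Icc c d := by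
      simp only [mem_inter, mem_Icc]; omega
    rw [h] at this; exact notMem_empty _ this
  · exact icc_inter_empty

lemma icc_subset_iff {a b c d : ℕ} (hab : a ≤ b) :
    Finset.Icc a b ⊆ Finset.Icc c d ↔ c ≤ a ∧ b ≤ d := by
  rw [Finset.Icc_subset_Icc_iff hab]

/-- Point vs interval: always disjoint or nested. -/
lemma point_nc (x c d : ℕ) :
    Finset.Icc x x ∩ Finset.Icc c d = ∅ ∨ Finset.Icc x x ⊆ Finset.Icc c d := by
  by_cases h : x ∈ Finset.Icc c d
  · right; intro y hy
    simp only [mem_Icc] at hy h ⊢; omega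
  · left; ext y; simp only [mem_inter, mem_Icc, notMem_empty, iff_false]
    simp only [mem_Icc] at h; omega

/-- If the endpoints `a, b` avoid a nonempty interval `[lo,hi]`, then `[a,b]` is
disjoint from it or contains it. -/
lemma outside_nc {lo hi a b : ℕ} (hlh : lo ≤ hi)
    (ha : a ∉ Finset.Icc lo hi) (hb : b ∉ Finset.Icc lo hi) :
    Finset.Icc a b ∩ Finset.Icc lo hi = ∅ ∨ Finset.Icc lo hi ⊆ Finset.Icc a b := by
  simp only [mem_Icc] at ha hb
  by_cases hc : b < lo ∨ hi < a
  · left; exact icc_inter_empty (by omega)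
  · right; intro y hy; simp only [mem_Icc] at hy ⊢; omega

/-! ### TL pattern basic facts -/

section TL

variable {ℓ : ℕ} {σ : Finset (Finset ℕ)}

def Zset (ℓ : ℕ) : Finset ℕ := Finset.Icc 1 (2 * ℓ + 1)

lemma oep_mem {q : ℕ × ℕ} :
    q ∈ oddEvenPairs ℓ σ ↔
      q.1 ≤ ℓ ∧ q.2 ≤ ℓ ∧ ({2 * q.1 + 1, 2 * q.2} : Finset ℕ) ∈ σ ∧ q.1 < q.2 := by
  unfold oddEvenPairs
  simp only [mem_filter, mem_product, mem_Icc]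
  constructor
  · rintro ⟨⟨h1, h2⟩, h3, h4⟩; exact ⟨h1.2, h2.2, h3, by omega⟩
  · rintro ⟨h1, h2, h3, h4⟩; exact ⟨⟨⟨Nat.zero_le _, h1⟩, ⟨Nat.zero_le _, h2⟩⟩, h3, by omega⟩

lemma oep_lt {q : ℕ × ℕ} (hq : q ∈ oddEvenPairs ℓ σ) : q.1 < q.2 := (oep_mem.1 hq).2.2.2

lemma oep_le {q : ℕ × ℕ} (hq : q ∈ oddEvenPairs ℓ σ) : q.2 ≤ ℓ := (oep_mem.1 hq).2.1

lemma oep_block {q : ℕ × ℕ} (hq : q ∈ oddEvenPairs ℓ σ) :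
    ({2 * q.1 + 1, 2 * q.2} : Finset ℕ) ∈ σ := (oep_mem.1 hq).2.2.1

/-- distinct oep pairs give distinct blocks -/
lemma oep_block_inj {q q' : ℕ × ℕ} (hq : q ∈ oddEvenPairs ℓ σ) (hq' : q' ∈ oddEvenPairs ℓ σ)
    (h : ({2 * q.1 + 1, 2 * q.2} : Finset ℕ) = ({2 * q'.1 + 1, 2 * q'.2} : Finset ℕ)) :
    q = q' := by
  have h1 : (2 * q.1 + 1 : ℕ) ∈ ({2 * q'.1 + 1, 2 * q'.2} : Finset ℕ) := by
    rw [← h]; simp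
  have h2 : (2 * q.2 : ℕ) ∈ ({2 * q'.1 + 1, 2 * q'.2} : Finset ℕ) := by
    rw [← h]; simp
  simp only [mem_insert, mem_singleton] at h1 h2
  rw [Prod.ext_iff]
  exact ⟨by omega, by omega⟩

lemma icc_eq_icc {a b a' b' : ℕ} (hab : a ≤ b)
    (h : Finset.Icc a b = Finset.Icc a' b') : a = a' ∧ b = b' := by
  have h1 : a ∈ Finset.Icc a' b' := by rw [← h]; simp [hab]
  have h2 : b ∈ Finset.Icc a' b' := by rw [← h]; simp [hab]
  have h3 : a' ∈ Finset.Icc a b := by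
    rw [h]; simp only [mem_Icc] at h1 ⊢; omega
  have h4 : b' ∈ Finset.Icc a b := by
    rw [h]; simp only [mem_Icc] at h1 ⊢; omega
  simp only [mem_Icc] at h1 h2 h3 h4
  omega

/-- Laminarity of the half-scale intervals. -/
lemma oep_laminar (hσ : IsTLPattern (Zset ℓ) σ) {q q' : ℕ × ℕ}
    (hq : q ∈ oddEvenPairs ℓ σ) (hq' : q' ∈ oddEvenPairs ℓ σ) (hne : q ≠ q') :
    Finset.Icc (q.1 + 1) q.2 ∩ Finset.Icc (q'.1 + 1) q'.2 = ∅ ∨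
    Finset.Icc (q.1 + 1) q.2 ⊂ Finset.Icc (q'.1 + 1) q'.2 ∨
    Finset.Icc (q'.1 + 1) q'.2 ⊂ Finset.Icc (q.1 + 1) q.2 := by
  have hab : q.1 < q.2 := oep_lt hq
  have hab' : q'.1 < q'.2 := oep_lt hq'
  have hqeq : Finset.Icc (q.1 + 1) q.2 ≠ Finset.Icc (q'.1 + 1) q'.2 := by
    intro h
    obtain ⟨e1, e2⟩ := icc_eq_icc (by omega) h
    exact hne (Prod.ext (by omega) e2)
  have hBne : ({2 * q.1 + 1, 2 * q.2} : Finset ℕ) ≠ ({2 * q'.1 + 1, 2 * q'.2} : Finset ℕ) := by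
    intro h; exact hne (oep_block_inj hq hq' h)
  have := hσ.2.1 _ (oep_block hq) _ (oep_block hq') hBne
    (2 * q.1 + 1) (by simp) (2 * q.2) (by simp) (2 * q'.1 + 1) (by simp) (2 * q'.2) (by simp)
    (by omega) (by omega)
  rcases this with h | h | h
  · left
    rw [icc_inter_empty_iff (by omega) (by omega)] at h
    exact icc_inter_empty (by omega)
  · rw [icc_subset_iff (by omega)] at h
    have hss : Finset.Icc (q.1 + 1) q.2 ⊆ Finset.Icc (q'.1 + 1) q'.2 := by
      rw [icc_subset_iff (by omega)]; omega
    right; left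
    exact ⟨hss, fun hcon => hqeq (subset_antisymm hss hcon)⟩
  · rw [icc_subset_iff (by omega)] at h
    have hss : Finset.Icc (q'.1 + 1) q'.2 ⊆ Finset.Icc (q.1 + 1) q.2 := by
      rw [icc_subset_iff (by omega)]; omega
    right; right
    exact ⟨hss, fun hcon => hqeq (subset_antisymm hcon hss)⟩

lemma mem_carve_iff {q : ℕ × ℕ} {x : ℕ} :
    x ∈ carve ℓ σ q ↔ x ∈ Finset.Icc (q.1 + 1) q.2 ∧
      ∀ q' ∈ oddEvenPairs ℓ σ,
        Finset.Icc (q'.1 + 1) q'.2 ⊂ Finset.Icc (q.1 + 1) q.2 →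
          x ∉ Finset.Icc (q'.1 + 1) q'.2 := by
  simp only [carve, mem_sdiff, mem_biUnion, mem_filter, not_exists]
  constructor
  · rintro ⟨h1, h2⟩
    refine ⟨h1, fun q' hq' hss hmem => h2 q' ⟨⟨hq', hss⟩, hmem⟩⟩
  · rintro ⟨h1, h2⟩
    refine ⟨h1, fun q' hc => h2 q' hc.1.1 hc.1.2 hc.2⟩

lemma carve_subset {q : ℕ × ℕ} : carve ℓ σ q ⊆ Finset.Icc (q.1 + 1) q.2 :=
  sdiff_subset

lemma carve_endpoints (hσ : IsTLPattern (Zset ℓ) σ) {q : ℕ × ℕ}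
    (hq : q ∈ oddEvenPairs ℓ σ) : q.1 + 1 ∈ carve ℓ σ q ∧ q.2 ∈ carve ℓ σ q := by
  have hab : q.1 < q.2 := oep_lt hq
  constructor
  · rw [mem_carve_iff]
    refine ⟨by simp only [mem_Icc]; omega, ?_⟩
    intro q' hq' hss hmem
    simp only [mem_Icc] at hmem
    have hab' : q'.1 < q'.2 := oep_lt hq'
    have h1 := hss.1
    rw [icc_subset_iff (by omega)] at h1
    have ha : q'.1 = q.1 := by omega
    have heq := block_unique hσ.1 (oep_block hq') (oep_block hq)
      (by simp only [mem_insert, mem_singleton]; omega :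
        (2 * q.1 + 1 : ℕ) ∈ ({2 * q'.1 + 1, 2 * q'.2} : Finset ℕ))
      (by simp : (2 * q.1 + 1 : ℕ) ∈ ({2 * q.1 + 1, 2 * q.2} : Finset ℕ))
    have hb : q'.2 = q.2 := by
      have : (2 * q'.2 : ℕ) ∈ ({2 * q.1 + 1, 2 * q.2} : Finset ℕ) := by
        rw [← heq]; simp
      simp only [mem_insert, mem_singleton] at this
      omega
    exact hss.2 (by rw [icc_subset_iff (by omega)]; omega)
  · rw [mem_carve_iff]
    refine ⟨by simp only [mem_Icc]; omega, ?_⟩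
    intro q' hq' hss hmem
    simp only [mem_Icc] at hmem
    have hab' : q'.1 < q'.2 := oep_lt hq'
    have h1 := hss.1
    rw [icc_subset_iff (by omega)] at h1
    have hb : q'.2 = q.2 := by omega
    have heq := block_unique hσ.1 (oep_block hq') (oep_block hq)
      (by simp only [mem_insert, mem_singleton]; omega :
        (2 * q.2 : ℕ) ∈ ({2 * q'.1 + 1, 2 * q'.2} : Finset ℕ))
      (by simp : (2 * q.2 : ℕ) ∈ ({2 * q.1 + 1, 2 * q.2} : Finset ℕ))
    have ha : q'.1 = q.1 := by
      have : (2 * q'.1 + 1 : ℕ) ∈ ({2 * q.1 + 1, 2 * q.2} : Finset ℕ) := by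
        rw [← heq]; simp
      simp only [mem_insert, mem_singleton] at this
      omega
    exact hss.2 (by rw [icc_subset_iff (by omega)]; omega)

lemma carve_nonempty (hσ : IsTLPattern (Zset ℓ) σ) {q : ℕ × ℕ}
    (hq : q ∈ oddEvenPairs ℓ σ) : (carve ℓ σ q).Nonempty :=
  ⟨q.1 + 1, (carve_endpoints hσ hq).1⟩

/-- distinct pairs give disjoint carve sets -/
lemma carve_disjoint (hσ : IsTLPattern (Zset ℓ) σ) {q q' : ℕ × ℕ}
    (hq : q ∈ oddEvenPairs ℓ σ) (hq' : q' ∈ oddEvenPairs ℓ σ) (hne : q ≠ q') :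
    carve ℓ σ q ∩ carve ℓ σ q' = ∅ := by
  ext x
  simp only [mem_inter, notMem_empty, iff_false]
  rintro ⟨h1, h2⟩
  rcases oep_laminar hσ hq hq' hne with h | h | h
  · have := mem_inter.2 ⟨carve_subset h1, carve_subset h2⟩
    rw [h] at this; exact notMem_empty _ this
  · exact (mem_carve_iff.1 h2).2 q hq h (carve_subset h1)
  · exact (mem_carve_iff.1 h1).2 q' hq' h (carve_subset h2)

/-- coverage: a point in some interval is in some carve set -/
lemma carve_cover (hσ : IsTLPattern (Zset ℓ) σ) {x : ℕ} {q : ℕ × ℕ}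
    (hq : q ∈ oddEvenPairs ℓ σ) (hx : x ∈ Finset.Icc (q.1 + 1) q.2) :
    ∃ q' ∈ oddEvenPairs ℓ σ, x ∈ carve ℓ σ q' := by
  classical
  set s := (oddEvenPairs ℓ σ).filter (fun q' => x ∈ Finset.Icc (q'.1 + 1) q'.2) with hs
  have hsne : s.Nonempty := ⟨q, mem_filter.2 ⟨hq, hx⟩⟩
  obtain ⟨q', hq's, hmin⟩ := s.exists_min_image (fun q' => (Finset.Icc (q'.1 + 1) q'.2).card) hsne
  rw [hs, mem_filter] at hq's
  refine ⟨q', hq's.1, ?_⟩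
  rw [mem_carve_iff]
  refine ⟨hq's.2, ?_⟩
  intro q'' hq'' hss hmem
  have hmem' : q'' ∈ s := by rw [hs, mem_filter]; exact ⟨hq'', hmem⟩
  have hcard := hmin q'' hmem'
  have := Finset.card_lt_card hss
  omega

end TL

/-! ### The forward map Φ -/

noncomputable def ZBlk (ℓ : ℕ) (σ : Finset (Finset ℕ)) : Finset ℕ :=
  Finset.Icc 0 ℓ \ (oddEvenPairs ℓ σ).biUnion (carve ℓ σ)

noncomputable def Phi (ℓ : ℕ) (σ : Finset (Finset ℕ)) : Finset (Finset ℕ) :=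
  insert (ZBlk ℓ σ) ((oddEvenPairs ℓ σ).image (carve ℓ σ))

section PhiNCP

variable {ℓ : ℕ} {σ : Finset (Finset ℕ)}

lemma mem_ZBlk {x : ℕ} :
    x ∈ ZBlk ℓ σ ↔ x ≤ ℓ ∧ ∀ q ∈ oddEvenPairs ℓ σ, x ∉ carve ℓ σ q := by
  simp only [ZBlk, mem_sdiff, mem_Icc, mem_biUnion, not_exists]
  constructor
  · rintro ⟨h1, h2⟩; exact ⟨h1.2, fun q hq hx => h2 q ⟨hq, hx⟩⟩
  · rintro ⟨h1, h2⟩; exact ⟨⟨Nat.zero_le _, h1⟩, fun q hc => h2 q hc.1 hc.2⟩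

lemma zero_mem_ZBlk : 0 ∈ ZBlk ℓ σ := by
  rw [mem_ZBlk]
  refine ⟨Nat.zero_le _, fun q hq hx => ?_⟩
  have := carve_subset hx
  simp only [mem_Icc] at this
  omega

lemma ZBlk_ne_carve (hσ : IsTLPattern (Zset ℓ) σ) {q : ℕ × ℕ}
    (hq : q ∈ oddEvenPairs ℓ σ) : ZBlk ℓ σ ≠ carve ℓ σ q := by
  intro h
  have h1 : q.1 + 1 ∈ carve ℓ σ q := (carve_endpoints hσ hq).1
  have h2 : q.1 + 1 ∈ ZBlk ℓ σ := h ▸ h1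
  exact (mem_ZBlk.1 h2).2 q hq h1

lemma mem_Phi {L : Finset ℕ} :
    L ∈ Phi ℓ σ ↔ L = ZBlk ℓ σ ∨ ∃ q ∈ oddEvenPairs ℓ σ, carve ℓ σ q = L := by
  simp only [Phi, mem_insert, mem_image]

lemma Phi_subset (hσ : IsTLPattern (Zset ℓ) σ) {L : Finset ℕ} (hL : L ∈ Phi ℓ σ) :
    L ⊆ Finset.Icc 0 ℓ := by
  rcases mem_Phi.1 hL with rfl | ⟨q, hq, rfl⟩
  · exact sdiff_subset
  · intro x hx
    have h1 := carve_subset hx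
    have h2 := oep_le hq
    simp only [mem_Icc] at h1 ⊢
    omega

lemma Phi_unique (hσ : IsTLPattern (Zset ℓ) σ) {L L' : Finset ℕ} {x : ℕ}
    (hL : L ∈ Phi ℓ σ) (hL' : L' ∈ Phi ℓ σ) (hx : x ∈ L) (hx' : x ∈ L') : L = L' := by
  rcases mem_Phi.1 hL with rfl | ⟨q, hq, rfl⟩ <;>
    rcases mem_Phi.1 hL' with rfl | ⟨q', hq', rfl⟩
  · rfl
  · exact absurd hx' ((mem_ZBlk.1 hx).2 q' hq')
  · exact absurd hx ((mem_ZBlk.1 hx').2 q hq)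
  · rcases eq_or_ne q q' with rfl | hne
    · rfl
    · have := carve_disjoint hσ hq hq' hne
      have hmem : x ∈ carve ℓ σ q ∩ carve ℓ σ q' := mem_inter.2 ⟨hx, hx'⟩
      rw [this] at hmem
      exact absurd hmem (notMem_empty x)

lemma Phi_isPartition (hσ : IsTLPattern (Zset ℓ) σ) :
    IsPartitionOf (Finset.Icc 0 ℓ) (Phi ℓ σ) := by
  refine ⟨?_, fun L hL => Phi_subset hσ hL, ?_⟩
  · intro L hL
    rcases mem_Phi.1 hL with rfl | ⟨q, hq, rfl⟩
    · exact ⟨0, zero_mem_ZBlk⟩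
    · exact carve_nonempty hσ hq
  · intro x hx
    by_cases hc : ∃ q ∈ oddEvenPairs ℓ σ, x ∈ carve ℓ σ q
    · obtain ⟨q, hq, hxq⟩ := hc
      refine ⟨carve ℓ σ q, ⟨mem_Phi.2 (Or.inr ⟨q, hq, rfl⟩), hxq⟩, ?_⟩
      rintro L ⟨hL, hxL⟩
      exact Phi_unique hσ hL (mem_Phi.2 (Or.inr ⟨q, hq, rfl⟩)) hxL hxq
    · push_neg at hc
      have hxZ : x ∈ ZBlk ℓ σ := by
        rw [mem_ZBlk]; exact ⟨(mem_Icc.1 hx).2, hc⟩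
      refine ⟨ZBlk ℓ σ, ⟨mem_Phi.2 (Or.inl rfl), hxZ⟩, ?_⟩
      rintro L ⟨hL, hxL⟩
      exact Phi_unique hσ hL (mem_Phi.2 (Or.inl rfl)) hxL hxZ

lemma Phi_noncrossing (hσ : IsTLPattern (Zset ℓ) σ) :
    PairwiseNoncrossing (Phi ℓ σ) := by
  intro L hL L' hL' hne a ha b hb c hc d hd hab hcd
  -- reduce to the case of carve blocks vs intervals
  rcases mem_Phi.1 hL with rfl | ⟨q, hq, rfl⟩ <;>
    rcases mem_Phi.1 hL' with rfl | ⟨q', hq', rfl⟩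
  · exact absurd rfl hne
  · -- L = ZBlk, L' = carve q'
    have hlt : q'.1 < q'.2 := oep_lt hq'
    have hcd' : Finset.Icc c d ⊆ Finset.Icc (q'.1 + 1) q'.2 :=
      Finset.Icc_subset_Icc (mem_Icc.1 (carve_subset hc)).1 (mem_Icc.1 (carve_subset hd)).2
    have hano : a ∉ Finset.Icc (q'.1 + 1) q'.2 := by
      intro hmem
      obtain ⟨q'', hq'', hq''x⟩ := carve_cover hσ hq' hmem
      exact (mem_ZBlk.1 ha).2 q'' hq'' hq''x
    have hbno : b ∉ Finset.Icc (q'.1 + 1) q'.2 := by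
      intro hmem
      obtain ⟨q'', hq'', hq''x⟩ := carve_cover hσ hq' hmem
      exact (mem_ZBlk.1 hb).2 q'' hq'' hq''x
    rcases outside_nc (by omega) hano hbno with h | h
    · left
      rw [← subset_empty]
      intro x hx
      rw [← h]
      exact mem_inter.2 ⟨(mem_inter.1 hx).1, hcd' (mem_inter.1 hx).2⟩
    · right; right; exact hcd'.trans h
  · -- L = carve q, L' = ZBlk    (symmetric)
    have hlt : q.1 < q.2 := oep_lt hq
    have hab' : Finset.Icc a b ⊆ Finset.Icc (q.1 + 1) q.2 :=
      Finset.Icc_subset_Icc (mem_Icc.1 (carve_subset ha)).1 (mem_Icc.1 (carve_subset hb)).2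
    have hcno : c ∉ Finset.Icc (q.1 + 1) q.2 := by
      intro hmem
      obtain ⟨q'', hq'', hq''x⟩ := carve_cover hσ hq hmem
      exact (mem_ZBlk.1 hc).2 q'' hq'' hq''x
    have hdno : d ∉ Finset.Icc (q.1 + 1) q.2 := by
      intro hmem
      obtain ⟨q'', hq'', hq''x⟩ := carve_cover hσ hq hmem
      exact (mem_ZBlk.1 hd).2 q'' hq'' hq''x
    rcases outside_nc (by omega) hcno hdno with h | h
    · left
      rw [← subset_empty]
      intro x hx
      rw [inter_comm] at h
      rw [← h]
      exact mem_inter.2 ⟨hab' (mem_inter.1 hx).1, (mem_inter.1 hx).2⟩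
    · right; left; exact hab'.trans h
  · -- both carve
    have hqne : q ≠ q' := fun h => hne (by rw [h])
    have hlt : q.1 < q.2 := oep_lt hq
    have hlt' : q'.1 < q'.2 := oep_lt hq'
    have hab' : Finset.Icc a b ⊆ Finset.Icc (q.1 + 1) q.2 :=
      Finset.Icc_subset_Icc (mem_Icc.1 (carve_subset ha)).1 (mem_Icc.1 (carve_subset hb)).2
    have hcd' : Finset.Icc c d ⊆ Finset.Icc (q'.1 + 1) q'.2 :=
      Finset.Icc_subset_Icc (mem_Icc.1 (carve_subset hc)).1 (mem_Icc.1 (carve_subset hd)).2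
    rcases oep_laminar hσ hq hq' hqne with h | h | h
    · left
      rw [← subset_empty]
      intro x hx
      rw [← h]
      exact mem_inter.2 ⟨hab' (mem_inter.1 hx).1, hcd' (mem_inter.1 hx).2⟩
    · -- Icc q ⊂ Icc q' : c,d ∉ Icc q since carve q' avoids it
      have hcno : c ∉ Finset.Icc (q.1 + 1) q.2 := fun hmem =>
        (mem_carve_iff.1 hc).2 q hq h hmem
      have hdno : d ∉ Finset.Icc (q.1 + 1) q.2 := fun hmem =>
        (mem_carve_iff.1 hd).2 q hq h hmem
      rcases outside_nc (by omega) hcno hdno with h2 | h2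
      · left
        rw [← subset_empty]
        intro x hx
        rw [inter_comm] at h2
        rw [← h2]
        exact mem_inter.2 ⟨hab' (mem_inter.1 hx).1, (mem_inter.1 hx).2⟩
      · right; left; exact hab'.trans h2
    · have hano : a ∉ Finset.Icc (q'.1 + 1) q'.2 := fun hmem =>
        (mem_carve_iff.1 ha).2 q' hq' h hmem
      have hbno : b ∉ Finset.Icc (q'.1 + 1) q'.2 := fun hmem =>
        (mem_carve_iff.1 hb).2 q' hq' h hmem
      rcases outside_nc (by omega) hano hbno with h2 | h2
      · left
        rw [← subset_empty]
        intro x hx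
        rw [← h2]
        exact mem_inter.2 ⟨(mem_inter.1 hx).1, hcd' (mem_inter.1 hx).2⟩
      · right; right; exact hcd'.trans h2

lemma Phi_isNCP (hσ : IsTLPattern (Zset ℓ) σ) : IsNCP (Finset.Icc 0 ℓ) (Phi ℓ σ) :=
  ⟨Phi_isPartition hσ, Phi_noncrossing hσ⟩

lemma Phi_filter (hσ : IsTLPattern (Zset ℓ) σ) :
    (Phi ℓ σ).filter (fun L => 0 ∉ L) = (oddEvenPairs ℓ σ).image (carve ℓ σ) := by
  ext L
  simp only [mem_filter, mem_Phi, mem_image]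
  constructor
  · rintro ⟨rfl | ⟨q, hq, rfl⟩, h0⟩
    · exact absurd zero_mem_ZBlk h0
    · exact ⟨q, hq, rfl⟩
  · rintro ⟨q, hq, rfl⟩
    refine ⟨Or.inr ⟨q, hq, rfl⟩, fun h0 => ?_⟩
    have := carve_subset h0
    simp only [mem_Icc] at this
    omega

lemma Phi_zero_block (hσ : IsTLPattern (Zset ℓ) σ) {L : Finset ℕ}
    (hL : L ∈ Phi ℓ σ) (h0 : 0 ∈ L) : L = ZBlk ℓ σ := by
  rcases mem_Phi.1 hL with rfl | ⟨q, hq, rfl⟩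
  · rfl
  · exfalso
    have := carve_subset h0
    simp only [mem_Icc] at this
    omega

end PhiNCP

/-! ### Part B : a TL pattern is determined by its odd-even pairs -/

/-- Bundled TL pattern data with a chosen singleton element. -/
structure TLData (ℓ : ℕ) (σ : Finset (Finset ℕ)) (dd : ℕ) : Prop where
  part : IsPartitionOf (Zset ℓ) σ
  nc : PairwiseNoncrossing σ
  dodd : Odd dd
  dmem : ({dd} : Finset ℕ) ∈ σ
  pairs : ∀ M ∈ σ, M ≠ ({dd} : Finset ℕ) →
    ∃ a b, a < b ∧ M = ({a, b} : Finset ℕ) ∧ (b < dd ∨ dd < a)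

lemma isTL_data {ℓ : ℕ} {σ : Finset (Finset ℕ)} (hσ : IsTLPattern (Zset ℓ) σ) :
    ∃ dd, TLData ℓ σ dd := by
  obtain ⟨hpart, hnc, M0, hM0, dd, hodd, rfl, hpairs⟩ := hσ
  exact ⟨dd, ⟨hpart, hnc, hodd, hM0, hpairs⟩⟩

lemma isTL_of_data {ℓ : ℕ} {σ : Finset (Finset ℕ)} {dd : ℕ} (h : TLData ℓ σ dd) :
    IsTLPattern (Zset ℓ) σ :=
  ⟨h.part, h.nc, {dd}, h.dmem, dd, h.dodd, rfl, h.pairs⟩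

/-- The partner of a point within its (two-element) block. -/
noncomputable def ptn (σ : Finset (Finset ℕ)) (x : ℕ) : ℕ :=
  (blk σ x).sum id - x

section Uniqueness

variable {ℓ : ℕ} {σ : Finset (Finset ℕ)} {dd : ℕ}

lemma ptn_pair (h : TLData ℓ σ dd) {x y : ℕ} (hxy : ({x, y} : Finset ℕ) ∈ σ)
    (hne : x ≠ y) : blk σ x = {x, y} ∧ ptn σ x = y := by
  have hxZ : x ∈ Zset ℓ := h.part.2.1 _ hxy (by simp)
  have hb : blk σ x = {x, y} := blk_eq h.part hxy (by simp)
  refine ⟨hb, ?_⟩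
  rw [ptn, hb, Finset.sum_pair hne]
  simp

lemma blk_d (h : TLData ℓ σ dd) : blk σ dd = {dd} :=
  blk_eq h.part h.dmem (by simp)

lemma dd_mem_Z (h : TLData ℓ σ dd) : dd ∈ Zset ℓ := h.part.2.1 _ h.dmem (by simp)

/-- For `x ≠ dd` in `Z`, the block of `x` is a pair on one side of `dd`. -/
lemma blk_pair (h : TLData ℓ σ dd) {x : ℕ} (hx : x ∈ Zset ℓ) (hxd : x ≠ dd) :
    blk σ x = {x, ptn σ x} ∧ ptn σ x ≠ x ∧ ({x, ptn σ x} : Finset ℕ) ∈ σ ∧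
      ((x < dd ∧ ptn σ x < dd) ∨ (dd < x ∧ dd < ptn σ x)) := by
  obtain ⟨hmem, hxb⟩ := blk_mem h.part hx
  have hne : blk σ x ≠ ({dd} : Finset ℕ) := by
    intro hc
    rw [hc] at hxb
    exact hxd (by simpa using hxb)
  obtain ⟨a, b, hab, habeq, hside⟩ := h.pairs _ hmem hne
  rw [habeq] at hxb
  simp only [mem_insert, mem_singleton] at hxb
  rcases hxb with rfl | rfl
  · have := ptn_pair h (habeq ▸ hmem) (by omega : x ≠ b)
    refine ⟨habeq.trans (by rw [this.2]), by omega, ?_, by omega⟩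
    rw [this.2]; rw [← habeq]; exact hmem
  · have hpair : ({x, a} : Finset ℕ) ∈ σ := by
      rw [Finset.pair_comm]; rw [← habeq]; exact hmem
    have := ptn_pair h hpair (by omega : x ≠ a)
    refine ⟨?_, by omega, ?_, by omega⟩
    · rw [this.1, this.2]
    · rw [this.2]; exact hpair
  <;> skip

lemma ptn_invol (h : TLData ℓ σ dd) {x : ℕ} (hx : x ∈ Zset ℓ) (hxd : x ≠ dd) :
    ptn σ (ptn σ x) = x ∧ ptn σ x ∈ Zset ℓ ∧ ptn σ x ≠ dd := by
  obtain ⟨hb, hne, hmem, hside⟩ := blk_pair h hx hxd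
  have hyZ : ptn σ x ∈ Zset ℓ := h.part.2.1 _ hmem (by simp)
  have hpair : ({ptn σ x, x} : Finset ℕ) ∈ σ := by rw [Finset.pair_comm]; exact hmem
  exact ⟨(ptn_pair h hpair hne).2, hyZ, by omega⟩

/-- Interior of a pair-block is closed under the partner map and avoids `dd`. -/
lemma interior_closed (h : TLData ℓ σ dd) {u v : ℕ} (huv : u < v)
    (hB : ({u, v} : Finset ℕ) ∈ σ) {x : ℕ} (hx : u < x) (hxv : x < v) :
    x ∈ Zset ℓ ∧ x ≠ dd ∧ u < ptn σ x ∧ ptn σ x < v := by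
  have huZ : u ∈ Zset ℓ := h.part.2.1 _ hB (by simp)
  have hvZ : v ∈ Zset ℓ := h.part.2.1 _ hB (by simp)
  simp only [Zset, mem_Icc] at huZ hvZ
  have hxZ : x ∈ Zset ℓ := by simp only [Zset, mem_Icc]; omega
  have hBne : ({u, v} : Finset ℕ) ≠ ({dd} : Finset ℕ) := by
    intro hc
    have : u ∈ ({dd} : Finset ℕ) := by rw [← hc]; simp
    have h2 : v ∈ ({dd} : Finset ℕ) := by rw [← hc]; simp
    simp only [mem_singleton] at this h2
    omega
  obtain ⟨a, b, hab, habeq, hside⟩ := h.pairs _ hB hBne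
  have hau : a = u ∧ b = v := by
    have h1 : u ∈ ({a, b} : Finset ℕ) := by rw [← habeq]; simp
    have h2 : v ∈ ({a, b} : Finset ℕ) := by rw [← habeq]; simp
    have h3 : a ∈ ({u, v} : Finset ℕ) := by rw [habeq]; simp
    simp only [mem_insert, mem_singleton] at h1 h2 h3
    omega
  have hxd : x ≠ dd := by omega
  obtain ⟨hb, hyne, hmem, _⟩ := blk_pair h hxZ hxd
  set y := ptn σ x with hy
  refine ⟨hxZ, hxd, ?_⟩
  have hblkne : ({x, y} : Finset ℕ) ≠ ({u, v} : Finset ℕ) := by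
    intro hc
    have : x ∈ ({u, v} : Finset ℕ) := by rw [← hc]; simp
    simp only [mem_insert, mem_singleton] at this
    omega
  have hyu : y ≠ u := by
    intro hc
    exact hblkne (block_unique h.part hmem hB
      (show y ∈ ({x, y} : Finset ℕ) by simp)
      (show y ∈ ({u, v} : Finset ℕ) by simp [hc]))
  have hyv : y ≠ v := by
    intro hc
    exact hblkne (block_unique h.part hmem hB
      (show y ∈ ({x, y} : Finset ℕ) by simp)
      (show y ∈ ({u, v} : Finset ℕ) by simp [hc]))
  rcases le_total x y with hle | hle
  · rcases h.nc _ hmem _ hB hblkne x (by simp) y (by simp) u (by simp) v (by simp) hle (le_of_lt huv) with hc | hc | hc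
    · exfalso
      have : x ∈ Finset.Icc x y ∩ Finset.Icc u v := by
        simp only [mem_inter, mem_Icc]; omega
      rw [hc] at this; exact notMem_empty _ this
    · rw [icc_subset_iff hle] at hc; omega
    · rw [icc_subset_iff (by omega)] at hc; omega
  · rcases h.nc _ hmem _ hB hblkne y (by simp) x (by simp) u (by simp) v (by simp) hle (le_of_lt huv) with hc | hc | hc
    · exfalso
      have : x ∈ Finset.Icc y x ∩ Finset.Icc u v := by
        simp only [mem_inter, mem_Icc]; omega
      rw [hc] at this; exact notMem_empty _ this
    · rw [icc_subset_iff hle] at hc; omega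
    · rw [icc_subset_iff (by omega)] at hc; omega

/-- A finite set closed under the partner map and avoiding `dd` has even cardinality. -/
lemma selfpaired_even_card (h : TLData ℓ σ dd) :
    ∀ n (S : Finset ℕ), S.card = n → S ⊆ Zset ℓ →
      (∀ x ∈ S, x ≠ dd ∧ ptn σ x ∈ S) → Even S.card := by
  intro n
  induction n using Nat.strong_induction_on with
  | _ n ih =>
    intro S hcard hSZ hself
    rcases S.eq_empty_or_nonempty with rfl | ⟨x, hx⟩
    · simp
    · obtain ⟨hxd, hyS⟩ := hself x hx
      set y := ptn σ x with hy
      have hxZ : x ∈ Zset ℓ := hSZ hx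
      obtain ⟨hbx, hyx, hbm, _⟩ := blk_pair h hxZ hxd
      obtain ⟨hinv, hyZ, hyd⟩ := ptn_invol h hxZ hxd
      have hsub : ({x, y} : Finset ℕ) ⊆ S := by
        intro z hz; simp only [mem_insert, mem_singleton] at hz
        rcases hz with rfl | rfl; exacts [hx, hyS]
      set S' := S \ {x, y} with hS'
      have hcard' : S'.card = S.card - 2 := by
        rw [hS', card_sdiff_of_subset hsub, card_pair (by omega)]
      have hself' : ∀ z ∈ S', z ≠ dd ∧ ptn σ z ∈ S' := by
        intro z hz
        rw [hS', mem_sdiff] at hz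
        obtain ⟨hzS, hznot⟩ := hz
        simp only [mem_insert, mem_singleton] at hznot
        push_neg at hznot
        obtain ⟨hzd, hpz⟩ := hself z hzS
        refine ⟨hzd, ?_⟩
        rw [hS', mem_sdiff]
        refine ⟨hpz, ?_⟩
        simp only [mem_insert, mem_singleton]
        push_neg
        constructor
        · intro hc
          have : ptn σ (ptn σ z) = z := (ptn_invol h (hSZ hzS) hzd).1
          rw [hc] at this
          rw [← this] at hznot
          exact hznot.2 rfl
        · intro hc
          have : ptn σ (ptn σ z) = z := (ptn_invol h (hSZ hzS) hzd).1
          rw [hc] at this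
          rw [hinv] at this
          exact hznot.1 this.symm
      have hcard2 : (2 : ℕ) ≤ S.card := by
        have := Finset.card_le_card hsub
        rw [card_pair (by omega)] at this
        omega
      have := ih (S.card - 2) (by omega) S' hcard' (fun z hz => hSZ (mem_sdiff.1 hz).1) hself'
      rw [hcard'] at this
      obtain ⟨k, hk⟩ := this
      exact ⟨k + 1, by omega⟩

/-- pair blocks consist of one even and one odd element. -/
lemma pair_parity (h : TLData ℓ σ dd) {u v : ℕ} (huv : u < v)
    (hB : ({u, v} : Finset ℕ) ∈ σ) : (u + v) % 2 = 1 := by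
  have huZ : u ∈ Zset ℓ := h.part.2.1 _ hB (by simp)
  have hvZ : v ∈ Zset ℓ := h.part.2.1 _ hB (by simp)
  simp only [Zset, mem_Icc] at huZ hvZ
  have hself : ∀ x ∈ Finset.Ioo u v, x ≠ dd ∧ ptn σ x ∈ Finset.Ioo u v := by
    intro x hx
    simp only [mem_Ioo] at hx
    obtain ⟨_, h2, h3, h4⟩ := interior_closed h huv hB hx.1 hx.2
    exact ⟨h2, by simp only [mem_Ioo]; omega⟩
  have hsubZ : Finset.Ioo u v ⊆ Zset ℓ := by
    intro x hx; simp only [mem_Ioo] at hx; simp only [Zset, mem_Icc]; omega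
  have := selfpaired_even_card h _ _ rfl hsubZ hself
  rw [Nat.card_Ioo] at this
  obtain ⟨k, hk⟩ := this
  omega

/-! ### The residual set -/

def Rres (ℓ : ℕ) (E : Finset (ℕ × ℕ)) : Finset ℕ :=
  Zset ℓ \ E.biUnion (fun q => {2 * q.1 + 1, 2 * q.2})

lemma mem_Rres {E : Finset (ℕ × ℕ)} {x : ℕ} :
    x ∈ Rres ℓ E ↔ x ∈ Zset ℓ ∧ ∀ q ∈ E, x ≠ 2 * q.1 + 1 ∧ x ≠ 2 * q.2 := by
  simp only [Rres, mem_sdiff, mem_biUnion, not_exists, mem_insert, mem_singleton]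
  constructor
  · rintro ⟨h1, h2⟩
    exact ⟨h1, fun q hq => by
      have := h2 q
      push_neg at this
      exact this hq⟩
  · rintro ⟨h1, h2⟩
    refine ⟨h1, fun q hc => ?_⟩
    obtain ⟨hq, hor⟩ := hc
    rcases hor with hh | hh <;> [exact (h2 q hq).1 hh; exact (h2 q hq).2 hh]

lemma dd_mem_Rres (h : TLData ℓ σ dd) : dd ∈ Rres ℓ (oddEvenPairs ℓ σ) := by
  rw [mem_Rres]
  refine ⟨dd_mem_Z h, fun q hq => ?_⟩
  have hblock := oep_block hq
  have hlt := oep_lt hq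
  constructor
  · intro hc
    have := block_unique h.part hblock h.dmem
      (show dd ∈ ({2 * q.1 + 1, 2 * q.2} : Finset ℕ) by simp [← hc])
      (by simp)
    have h2 : (2 * q.2 : ℕ) ∈ ({dd} : Finset ℕ) := by rw [← this]; simp
    simp only [mem_singleton] at h2
    omega
  · intro hc
    have := block_unique h.part hblock h.dmem
      (show dd ∈ ({2 * q.1 + 1, 2 * q.2} : Finset ℕ) by simp [← hc])
      (by simp)
    have h2 : (2 * q.1 + 1 : ℕ) ∈ ({dd} : Finset ℕ) := by rw [← this]; simp
    simp only [mem_singleton] at h2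
    omega

/-- An even element of the residual set opens its block (partner is a larger odd
element of the residual set). -/
lemma even_R_ptn (h : TLData ℓ σ dd) {x : ℕ} (hx : x ∈ Rres ℓ (oddEvenPairs ℓ σ))
    (hev : x % 2 = 0) :
    x < ptn σ x ∧ ptn σ x ∈ Rres ℓ (oddEvenPairs ℓ σ) ∧ ptn σ x % 2 = 1 ∧
      ({x, ptn σ x} : Finset ℕ) ∈ σ := by
  obtain ⟨hxZ, hxE⟩ := mem_Rres.1 hx
  have hxd : x ≠ dd := by
    obtain ⟨k, hk⟩ := h.dodd; omega
  obtain ⟨hbx, hyx, hbm, _⟩ := blk_pair h hxZ hxd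
  set y := ptn σ x with hy
  have hyZ : y ∈ Zset ℓ := h.part.2.1 _ hbm (by simp)
  simp only [Zset, mem_Icc] at hyZ
  have hxZ' := hxZ
  simp only [Zset, mem_Icc] at hxZ'
  have hpar : (x + y) % 2 = 1 := by
    rcases lt_or_gt_of_ne (Ne.symm hyx) with hlt | hlt
    · exact pair_parity h hlt hbm
    · have := pair_parity h hlt (by rw [Finset.pair_comm]; exact hbm)
      omega
  have hyodd : y % 2 = 1 := by omega
  have hxy : x < y := by
    by_contra hc
    push_neg at hc
    have hlt : y < x := by omega
    -- then {y, x} is an odd-even block, so x is not residual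
    set q : ℕ × ℕ := ((y - 1) / 2, x / 2) with hq
    have hqoep : q ∈ oddEvenPairs ℓ σ := by
      rw [oep_mem]
      have e1 : 2 * q.1 + 1 = y := by simp only [hq]; omega
      have e2 : 2 * q.2 = x := by simp only [hq]; omega
      refine ⟨by simp only [hq]; omega, by simp only [hq]; omega, ?_, by omega⟩
      rw [e1, e2, Finset.pair_comm]
      exact hbm
    have := hxE q hqoep
    simp only [hq] at this
    omega
  refine ⟨hxy, ?_, hyodd, hbm⟩
  rw [mem_Rres]
  refine ⟨h.part.2.1 _ hbm (by simp), fun q hq => ?_⟩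
  constructor
  · intro hc
    -- then the block of y is the oep block; so it equals {x,y}
    have hblock := oep_block hq
    have hlt := oep_lt hq
    have heq := block_unique h.part hblock hbm
      (show y ∈ ({2 * q.1 + 1, 2 * q.2} : Finset ℕ) by simp [← hc])
      (by simp)
    -- {2q1+1, 2q2} = {x, y} with y = 2q1+1 odd; so x = 2q2 and 2q1+1 < 2q2 means y < x
    have h2 : (2 * q.2 : ℕ) ∈ ({x, y} : Finset ℕ) := by rw [← heq]; simp
    simp only [mem_insert, mem_singleton] at h2
    omega
  · intro hc
    omega

/-- An odd element ≠ dd of the residual set closes its block. -/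
lemma odd_R_ptn (h : TLData ℓ σ dd) {x : ℕ} (hx : x ∈ Rres ℓ (oddEvenPairs ℓ σ))
    (hodd : x % 2 = 1) (hxd : x ≠ dd) :
    ptn σ x < x ∧ ptn σ x ∈ Rres ℓ (oddEvenPairs ℓ σ) ∧ ptn σ x % 2 = 0 ∧
      ({x, ptn σ x} : Finset ℕ) ∈ σ := by
  obtain ⟨hxZ, hxE⟩ := mem_Rres.1 hx
  obtain ⟨hbx, hyx, hbm, _⟩ := blk_pair h hxZ hxd
  set y := ptn σ x with hy
  have hyZ : y ∈ Zset ℓ := h.part.2.1 _ hbm (by simp)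
  simp only [Zset, mem_Icc] at hyZ
  have hxZ' := hxZ
  simp only [Zset, mem_Icc] at hxZ'
  have hpar : (x + y) % 2 = 1 := by
    rcases lt_or_gt_of_ne (Ne.symm hyx) with hlt | hlt
    · exact pair_parity h hlt hbm
    · have := pair_parity h hlt (by rw [Finset.pair_comm]; exact hbm)
      omega
  have hyev : y % 2 = 0 := by omega
  have hxy : y < x := by
    by_contra hc
    push_neg at hc
    have hlt : x < y := by omega
    set q : ℕ × ℕ := ((x - 1) / 2, y / 2) with hq
    have hqoep : q ∈ oddEvenPairs ℓ σ := by
      rw [oep_mem]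
      have e1 : 2 * q.1 + 1 = x := by simp only [hq]; omega
      have e2 : 2 * q.2 = y := by simp only [hq]; omega
      refine ⟨by simp only [hq]; omega, by simp only [hq]; omega, ?_, by omega⟩
      rw [e1, e2]
      exact hbm
    have := hxE q hqoep
    simp only [hq] at this
    omega
  refine ⟨hxy, ?_, hyev, hbm⟩
  rw [mem_Rres]
  refine ⟨h.part.2.1 _ hbm (by simp), fun q hq => ?_⟩
  constructor
  · intro hc; omega
  · intro hc
    have hblock := oep_block hq
    have hlt := oep_lt hq
    have heq := block_unique h.part hblock hbm
      (show y ∈ ({2 * q.1 + 1, 2 * q.2} : Finset ℕ) by simp [← hc])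
      (by simp)
    have h2 : (2 * q.1 + 1 : ℕ) ∈ ({x, y} : Finset ℕ) := by rw [← heq]; simp
    simp only [mem_insert, mem_singleton] at h2
    omega

/-- balance of a candidate interval w.r.t. the residual set -/
def bal (ℓ : ℕ) (E : Finset (ℕ × ℕ)) (e o : ℕ) : Prop :=
  ((Finset.Ioo e o ∩ Rres ℓ E).filter (fun x => x % 2 = 0)).card =
    ((Finset.Ioo e o ∩ Rres ℓ E).filter (fun x => x % 2 = 1)).card

lemma bal_holds (h : TLData ℓ σ dd) {e : ℕ} (he : e ∈ Rres ℓ (oddEvenPairs ℓ σ))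
    (hev : e % 2 = 0) : bal ℓ (oddEvenPairs ℓ σ) e (ptn σ e) := by
  obtain ⟨heo, hoR, hoodd, hblock⟩ := even_R_ptn h he hev
  set o := ptn σ e with ho
  unfold bal
  refine Finset.card_bij' (fun x _ => ptn σ x) (fun x _ => ptn σ x) ?_ ?_ ?_ ?_
  · intro x hx
    simp only [mem_filter, mem_inter, mem_Ioo] at hx ⊢
    obtain ⟨⟨⟨hx1, hx2⟩, hxR⟩, hxev⟩ := hx
    obtain ⟨hxZ, hxd, hp1, hp2⟩ := interior_closed h heo hblock hx1 hx2
    obtain ⟨hlt, hpR, hpodd, _⟩ := even_R_ptn h hxR hxev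
    exact ⟨⟨⟨hp1, hp2⟩, hpR⟩, hpodd⟩
  · intro x hx
    simp only [mem_filter, mem_inter, mem_Ioo] at hx ⊢
    obtain ⟨⟨⟨hx1, hx2⟩, hxR⟩, hxodd⟩ := hx
    obtain ⟨hxZ, hxd, hp1, hp2⟩ := interior_closed h heo hblock hx1 hx2
    obtain ⟨hlt, hpR, hpev, _⟩ := odd_R_ptn h hxR hxodd hxd
    exact ⟨⟨⟨hp1, hp2⟩, hpR⟩, hpev⟩
  · intro x hx
    simp only [mem_filter, mem_inter, mem_Ioo] at hx
    obtain ⟨⟨⟨hx1, hx2⟩, hxR⟩, hxev⟩ := hx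
    obtain ⟨hxZ, hxd, _, _⟩ := interior_closed h heo hblock hx1 hx2
    exact (ptn_invol h hxZ hxd).1
  · intro x hx
    simp only [mem_filter, mem_inter, mem_Ioo] at hx
    obtain ⟨⟨⟨hx1, hx2⟩, hxR⟩, hxodd⟩ := hx
    obtain ⟨hxZ, hxd, _, _⟩ := interior_closed h heo hblock hx1 hx2
    exact (ptn_invol h hxZ hxd).1

lemma bal_min (h : TLData ℓ σ dd) {e o1 : ℕ} (he : e ∈ Rres ℓ (oddEvenPairs ℓ σ))
    (hev : e % 2 = 0) (ho1 : o1 ∈ Rres ℓ (oddEvenPairs ℓ σ)) (ho1odd : o1 % 2 = 1)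
    (heo1 : e < o1) (hbal : bal ℓ (oddEvenPairs ℓ σ) e o1) : ptn σ e ≤ o1 := by
  by_contra hc
  push_neg at hc
  obtain ⟨heo, hoR, hoodd, hblock⟩ := even_R_ptn h he hev
  set o := ptn σ e with ho
  set T := Finset.Ioo e o1 ∩ Rres ℓ (oddEvenPairs ℓ σ) with hT
  have key : (insert o1 (T.filter (fun x => x % 2 = 1))).card ≤
      (T.filter (fun x => x % 2 = 0)).card := by
    apply Finset.card_le_card_of_injOn (ptn σ)
    · intro z hz
      simp only [mem_coe, mem_insert, mem_filter, hT, mem_inter, mem_Ioo] at hz ⊢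
      rcases hz with rfl | ⟨⟨⟨hz1, hz2⟩, hzR⟩, hzodd⟩
      · obtain ⟨hzZ, hzd, hp1, hp2⟩ := interior_closed h heo hblock heo1 hc
        obtain ⟨hlt, hpR, hpev, _⟩ := odd_R_ptn h ho1 ho1odd hzd
        exact ⟨⟨⟨hp1, hlt⟩, hpR⟩, hpev⟩
      · obtain ⟨hzZ, hzd, hp1, hp2⟩ := interior_closed h heo hblock hz1 (by omega)
        obtain ⟨hlt, hpR, hpev, _⟩ := odd_R_ptn h hzR hzodd hzd
        exact ⟨⟨⟨hp1, by omega⟩, hpR⟩, hpev⟩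
    · intro z hz w hw heq
      simp only [coe_insert, Set.mem_insert_iff, coe_filter, Set.mem_setOf_eq, hT,
        mem_inter, mem_Ioo] at hz hw
      have hzd : z ∈ Zset ℓ ∧ z ≠ dd := by
        rcases hz with rfl | ⟨⟨⟨hz1, hz2⟩, hzR⟩, _⟩
        · obtain ⟨h1, h2, _, _⟩ := interior_closed h heo hblock heo1 hc
          exact ⟨h1, h2⟩
        · obtain ⟨h1, h2, _, _⟩ := interior_closed h heo hblock hz1 (by omega)
          exact ⟨h1, h2⟩
      have hwd : w ∈ Zset ℓ ∧ w ≠ dd := by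
        rcases hw with rfl | ⟨⟨⟨hw1, hw2⟩, hwR⟩, _⟩
        · obtain ⟨h1, h2, _, _⟩ := interior_closed h heo hblock heo1 hc
          exact ⟨h1, h2⟩
        · obtain ⟨h1, h2, _, _⟩ := interior_closed h heo hblock hw1 (by omega)
          exact ⟨h1, h2⟩
      have e1 := (ptn_invol h hzd.1 hzd.2).1
      have e2 := (ptn_invol h hwd.1 hwd.2).1
      rw [← e1, ← e2, heq]
  have ho1T : o1 ∉ T.filter (fun x => x % 2 = 1) := by
    simp only [hT, mem_filter, mem_inter, mem_Ioo]
    rintro ⟨⟨⟨_, hlt⟩, _⟩, _⟩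
    omega
  rw [card_insert_of_notMem ho1T] at key
  unfold bal at hbal
  rw [← hT] at hbal
  omega

/-- Partner functions agree on even residual elements. -/
lemma ptn_agree {σ' : Finset (Finset ℕ)} {dd' : ℕ}
    (h : TLData ℓ σ dd) (h' : TLData ℓ σ' dd')
    (hE : oddEvenPairs ℓ σ = oddEvenPairs ℓ σ') {e : ℕ}
    (he : e ∈ Rres ℓ (oddEvenPairs ℓ σ)) (hev : e % 2 = 0) : ptn σ e = ptn σ' e := by
  have he' : e ∈ Rres ℓ (oddEvenPairs ℓ σ') := by rw [← hE]; exact he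
  obtain ⟨h1, h2, h3, _⟩ := even_R_ptn h he hev
  obtain ⟨h1', h2', h3', _⟩ := even_R_ptn h' he' hev
  have b1 : bal ℓ (oddEvenPairs ℓ σ) e (ptn σ e) := bal_holds h he hev
  have b2 : bal ℓ (oddEvenPairs ℓ σ) e (ptn σ' e) := by
    rw [hE]; exact bal_holds h' he' hev
  have le1 : ptn σ e ≤ ptn σ' e :=
    bal_min h he hev (by rw [hE]; exact h2') h3' h1' b2
  have le2 : ptn σ' e ≤ ptn σ e := by
    apply bal_min h' he' hev (by rw [← hE]; exact h2) h3 h1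
    rw [← hE]; exact b1
  omega

lemma dd_agree {σ' : Finset (Finset ℕ)} {dd' : ℕ}
    (h : TLData ℓ σ dd) (h' : TLData ℓ σ' dd')
    (hE : oddEvenPairs ℓ σ = oddEvenPairs ℓ σ') : dd = dd' := by
  by_contra hne
  have hdR : dd ∈ Rres ℓ (oddEvenPairs ℓ σ) := dd_mem_Rres h
  have hdR' : dd ∈ Rres ℓ (oddEvenPairs ℓ σ') := by rw [← hE]; exact hdR
  have hdodd : dd % 2 = 1 := by obtain ⟨k, hk⟩ := h.dodd; omega
  -- in σ', dd is an odd residual element different from dd', so it closes a block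
  obtain ⟨hlt, hwR', hwev, hblock'⟩ := odd_R_ptn h' hdR' hdodd hne
  set w := ptn σ' dd with hw
  have hwR : w ∈ Rres ℓ (oddEvenPairs ℓ σ) := by rw [hE]; exact hwR'
  have hwZ : w ∈ Zset ℓ := (mem_Rres.1 hwR).1
  have hdd'ne : w ≠ dd' := by obtain ⟨k, hk⟩ := h'.dodd; omega
  have hinv : ptn σ' w = dd := by
    have := (ptn_invol h' (dd_mem_Z h) hne).1
    rw [← hw] at this
    exact this
  have : ptn σ w = dd := by rw [ptn_agree h h' hE hwR hwev, hinv]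
  obtain ⟨hlt2, hpR, hpodd, hblock⟩ := even_R_ptn h hwR hwev
  rw [this] at hblock
  have := block_unique h.part hblock h.dmem
    (show dd ∈ ({w, dd} : Finset ℕ) by simp) (by simp)
  have hwmem : w ∈ ({dd} : Finset ℕ) := by rw [← this]; simp
  simp only [mem_singleton] at hwmem
  omega

lemma tl_subset {σ' : Finset (Finset ℕ)} {dd' : ℕ}
    (h : TLData ℓ σ dd) (h' : TLData ℓ σ' dd')
    (hE : oddEvenPairs ℓ σ = oddEvenPairs ℓ σ') : σ ⊆ σ' := by
  intro B hB
  have hdd : dd = dd' := dd_agree h h' hE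
  by_cases hBd : B = ({dd} : Finset ℕ)
  · rw [hBd, hdd]; exact h'.dmem
  · obtain ⟨a, b, hab, habeq, hside⟩ := h.pairs _ hB hBd
    have haZ : a ∈ Zset ℓ := h.part.2.1 _ hB (by rw [habeq]; simp)
    have hbZ' : b ∈ Zset ℓ := h.part.2.1 _ hB (by rw [habeq]; simp)
    have hpar : (a + b) % 2 = 1 := pair_parity h hab (habeq ▸ hB)
    simp only [Zset, mem_Icc] at haZ hbZ'
    rcases Nat.even_or_odd a with hev | hodd
    · -- a even: a is residual, use partner agreement
      have haR : a ∈ Rres ℓ (oddEvenPairs ℓ σ) := by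
        rw [mem_Rres]
        refine ⟨by simp only [Zset, mem_Icc]; omega, fun q hq => ?_⟩
        have hblock := oep_block hq
        have hlt := oep_lt hq
        constructor
        · intro hc
          obtain ⟨k, hk⟩ := hev; omega
        · intro hc
          have heq := block_unique h.part hblock (habeq ▸ hB)
            (show a ∈ ({2 * q.1 + 1, 2 * q.2} : Finset ℕ) by simp [← hc])
            (by simp)
          have h2 : (2 * q.1 + 1 : ℕ) ∈ ({a, b} : Finset ℕ) := by rw [← heq]; simp
          simp only [mem_insert, mem_singleton] at h2
          omega
      have haev : a % 2 = 0 := by obtain ⟨k, hk⟩ := hev; omega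
      have hp1 : ptn σ a = b := (ptn_pair h (habeq ▸ hB) (by omega)).2
      have hp2 : ptn σ' a = b := by rw [← ptn_agree h h' hE haR haev, hp1]
      have haR' : a ∈ Rres ℓ (oddEvenPairs ℓ σ') := by rw [← hE]; exact haR
      obtain ⟨_, _, _, hblock'⟩ := even_R_ptn h' haR' haev
      rw [hp2] at hblock'
      rw [habeq]
      exact hblock'
    · -- a odd: {a, b} is an odd-even block shared via hE
      have hbev : b % 2 = 0 := by obtain ⟨k, hk⟩ := hodd; omega
      have haodd : a % 2 = 1 := by obtain ⟨k, hk⟩ := hodd; omega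
      set q : ℕ × ℕ := ((a - 1) / 2, b / 2) with hq
      have e1 : 2 * q.1 + 1 = a := by simp only [hq]; omega
      have e2 : 2 * q.2 = b := by simp only [hq]; omega
      have hqoep : q ∈ oddEvenPairs ℓ σ := by
        rw [oep_mem]
        refine ⟨by simp only [hq]; omega, by simp only [hq]; omega, ?_, by omega⟩
        rw [e1, e2, ← habeq]; exact hB
      have hqoep' : q ∈ oddEvenPairs ℓ σ' := by rw [← hE]; exact hqoep
      have := oep_block hqoep'
      rw [e1, e2, ← habeq] at this
      exact this

lemma tl_unique {σ' : Finset (Finset ℕ)} {dd' : ℕ}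
    (h : TLData ℓ σ dd) (h' : TLData ℓ σ' dd')
    (hE : oddEvenPairs ℓ σ = oddEvenPairs ℓ σ') : σ = σ' :=
  subset_antisymm (tl_subset h h' hE) (tl_subset h' h hE.symm)

end Uniqueness

/-! ### Injectivity of Φ -/

lemma carve_eq_q {ℓ : ℕ} {σ σ' : Finset (Finset ℕ)} {q q' : ℕ × ℕ}
    (hσ : IsTLPattern (Zset ℓ) σ) (hσ' : IsTLPattern (Zset ℓ) σ')
    (hq : q ∈ oddEvenPairs ℓ σ) (hq' : q' ∈ oddEvenPairs ℓ σ')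
    (hcc : carve ℓ σ q = carve ℓ σ' q') : q = q' := by
  have h1 : q.1 + 1 ∈ carve ℓ σ' q' := hcc ▸ (carve_endpoints hσ hq).1
  have h2 : q'.1 + 1 ∈ carve ℓ σ q := hcc.symm ▸ (carve_endpoints hσ' hq').1
  have h3 : q.2 ∈ carve ℓ σ' q' := hcc ▸ (carve_endpoints hσ hq).2
  have h4 : q'.2 ∈ carve ℓ σ q := hcc.symm ▸ (carve_endpoints hσ' hq').2
  have s1 := mem_Icc.1 (carve_subset h1)
  have s2 := mem_Icc.1 (carve_subset h2)
  have s3 := mem_Icc.1 (carve_subset h3)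
  have s4 := mem_Icc.1 (carve_subset h4)
  exact Prod.ext (by omega) (by omega)

lemma oep_of_Phi {ℓ : ℕ} {σ σ' : Finset (Finset ℕ)}
    (hσ : IsTLPattern (Zset ℓ) σ) (hσ' : IsTLPattern (Zset ℓ) σ')
    (hP : Phi ℓ σ = Phi ℓ σ') : oddEvenPairs ℓ σ = oddEvenPairs ℓ σ' := by
  have himg : (oddEvenPairs ℓ σ).image (carve ℓ σ) =
      (oddEvenPairs ℓ σ').image (carve ℓ σ') := by
    rw [← Phi_filter hσ, ← Phi_filter hσ', hP]
  ext q
  constructor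
  · intro hq
    have : carve ℓ σ q ∈ (oddEvenPairs ℓ σ').image (carve ℓ σ') := by
      rw [← himg]; exact mem_image_of_mem _ hq
    obtain ⟨q', hq', hcc⟩ := mem_image.1 this
    rwa [carve_eq_q hσ hσ' hq hq' hcc.symm]
  · intro hq
    have : carve ℓ σ' q ∈ (oddEvenPairs ℓ σ).image (carve ℓ σ) := by
      rw [himg]; exact mem_image_of_mem _ hq
    obtain ⟨q', hq', hcc⟩ := mem_image.1 this
    rwa [carve_eq_q hσ hσ' hq' hq hcc] at hq'

lemma Phi_injOn {ℓ : ℕ} {σ σ' : Finset (Finset ℕ)}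
    (hσ : IsTLPattern (Zset ℓ) σ) (hσ' : IsTLPattern (Zset ℓ) σ')
    (hP : Phi ℓ σ = Phi ℓ σ') : σ = σ' := by
  obtain ⟨dd, h⟩ := isTL_data hσ
  obtain ⟨dd', h'⟩ := isTL_data hσ'
  exact tl_unique h h' (oep_of_Phi hσ hσ' hP)

/-! ### Part C : an injection Ψ from NCPs to TL patterns -/

def fmax (L : Finset ℕ) : ℕ := L.max.getD 0
def fmin (L : Finset ℕ) : ℕ := L.min.getD 0
def nxt (L : Finset ℕ) (i : ℕ) : ℕ := ((L.filter (fun j => i < j)).min).getD 0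
def prv (L : Finset ℕ) (j : ℕ) : ℕ := ((L.filter (fun i => i < j)).max).getD 0

lemma fmax_spec {L : Finset ℕ} (h : L.Nonempty) :
    fmax L ∈ L ∧ ∀ x ∈ L, x ≤ fmax L := by
  have hc : (↑(L.max' h) : WithBot ℕ) = L.max := Finset.coe_max' h
  have : fmax L = L.max' h := by rw [fmax, ← hc]; rfl
  rw [this]
  exact ⟨L.max'_mem h, fun x hx => L.le_max' x hx⟩

lemma fmin_spec {L : Finset ℕ} (h : L.Nonempty) :
    fmin L ∈ L ∧ ∀ x ∈ L, fmin L ≤ x := by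
  have hc : (↑(L.min' h) : WithBot ℕ) = L.min := Finset.coe_min' h
  have : fmin L = L.min' h := by rw [fmin, ← hc]; rfl
  rw [this]
  exact ⟨L.min'_mem h, fun x hx => L.min'_le x hx⟩

lemma nxt_spec {L : Finset ℕ} {i j0 : ℕ} (hj0 : j0 ∈ L) (hij0 : i < j0) :
    nxt L i ∈ L ∧ i < nxt L i ∧ ∀ j ∈ L, i < j → nxt L i ≤ j := by
  have hne : (L.filter (fun j => i < j)).Nonempty := ⟨j0, mem_filter.2 ⟨hj0, hij0⟩⟩
  have := fmin_spec hne
  rw [show fmin (L.filter (fun j => i < j)) = nxt L i from rfl] at this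
  obtain ⟨h1, h2⟩ := this
  rw [mem_filter] at h1
  exact ⟨h1.1, h1.2, fun j hj hij => h2 j (mem_filter.2 ⟨hj, hij⟩)⟩

lemma prv_spec {L : Finset ℕ} {j i0 : ℕ} (hi0 : i0 ∈ L) (hij0 : i0 < j) :
    prv L j ∈ L ∧ prv L j < j ∧ ∀ i ∈ L, i < j → i ≤ prv L j := by
  have hne : (L.filter (fun i => i < j)).Nonempty := ⟨i0, mem_filter.2 ⟨hi0, hij0⟩⟩
  have := fmax_spec hne
  rw [show fmax (L.filter (fun i => i < j)) = prv L j from rfl] at this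
  obtain ⟨h1, h2⟩ := this
  rw [mem_filter] at h1
  exact ⟨h1.1, h1.2, fun i hi hij => h2 i (mem_filter.2 ⟨hi, hij⟩)⟩

lemma nxt_prv {L : Finset ℕ} {j : ℕ} (hj : j ∈ L) (hne : j ≠ fmin L) :
    nxt L (prv L j) = j ∧ prv L j ∈ L ∧ prv L j < j := by
  have hLne : L.Nonempty := ⟨j, hj⟩
  have hmin := fmin_spec hLne
  have hminlt : fmin L < j := lt_of_le_of_ne (hmin.2 j hj) (Ne.symm hne)
  obtain ⟨hp1, hp2, hp3⟩ := prv_spec hmin.1 hminlt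
  obtain ⟨hn1, hn2, hn3⟩ := nxt_spec hj hp2
  have hle := hn3 j hj hp2
  rcases lt_or_eq_of_le hle with hlt | heq
  · exact absurd (hp3 _ hn1 hlt) (by omega)
  · exact ⟨heq, hp1, hp2⟩

lemma prv_nxt {L : Finset ℕ} {i j0 : ℕ} (hi : i ∈ L) (hj0 : j0 ∈ L) (hij0 : i < j0) :
    prv L (nxt L i) = i ∧ nxt L i ∈ L ∧ i < nxt L i := by
  obtain ⟨hn1, hn2, hn3⟩ := nxt_spec hj0 hij0
  obtain ⟨hp1, hp2, hp3⟩ := prv_spec hi hn2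
  have hle := hp3 i hi hn2
  rcases lt_or_eq_of_le hle with hlt | heq
  · exact absurd (hn3 _ hp1 hlt) (by omega)
  · exact ⟨heq.symm, hn1, hn2⟩

/-- The inverse-direction injection: Kreweras-style completion. -/
noncomputable def psi (P : Finset (Finset ℕ)) : Finset (Finset ℕ) :=
  (P.biUnion fun L => (L.filter (fun i => i ≠ fmax L)).image
      fun i => ({2 * i + 1, 2 * nxt L i} : Finset ℕ))
    ∪ (P.filter (fun L => 0 ∉ L)).image
        (fun L => ({2 * fmin L, 2 * fmax L + 1} : Finset ℕ))
    ∪ {({2 * fmax (blk P 0) + 1} : Finset ℕ)}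

lemma mem_psi {P : Finset (Finset ℕ)} {M : Finset ℕ} :
    M ∈ psi P ↔
      (∃ L ∈ P, ∃ i ∈ L, i ≠ fmax L ∧ M = ({2 * i + 1, 2 * nxt L i} : Finset ℕ)) ∨
      (∃ L ∈ P, 0 ∉ L ∧ M = ({2 * fmin L, 2 * fmax L + 1} : Finset ℕ)) ∨
      M = ({2 * fmax (blk P 0) + 1} : Finset ℕ) := by
  simp only [psi, mem_union, mem_biUnion, mem_image, mem_filter, mem_singleton]
  constructor
  · rintro ((⟨L, hL, i, ⟨hi, hifm⟩, heq⟩ | ⟨L, ⟨hL, h0⟩, heq⟩) | heq)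
    · exact Or.inl ⟨L, hL, i, hi, hifm, heq.symm⟩
    · exact Or.inr (Or.inl ⟨L, hL, h0, heq.symm⟩)
    · exact Or.inr (Or.inr heq)
  · rintro (⟨L, hL, i, hi, hifm, heq⟩ | ⟨L, hL, h0, heq⟩ | heq)
    · exact Or.inl (Or.inl ⟨L, hL, i, ⟨hi, hifm⟩, heq.symm⟩)
    · exact Or.inl (Or.inr ⟨L, ⟨hL, h0⟩, heq.symm⟩)
    · exact Or.inr heq

section PsiTL

variable {ℓ : ℕ} {P : Finset (Finset ℕ)}

lemma ncp_bound (hP : IsNCP (Finset.Icc 0 ℓ) P) {L : Finset ℕ} (hL : L ∈ P)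
    {x : ℕ} (hx : x ∈ L) : x ≤ ℓ := by
  have := hP.1.2.1 L hL hx
  simp only [mem_Icc] at this
  exact this.2

lemma L0_mem (hP : IsNCP (Finset.Icc 0 ℓ) P) : blk P 0 ∈ P ∧ 0 ∈ blk P 0 :=
  blk_mem hP.1 (by simp)

lemma consec_facts {L : Finset ℕ} {i : ℕ} (hi : i ∈ L) (hifm : i ≠ fmax L) :
    i < nxt L i ∧ nxt L i ∈ L ∧ prv L (nxt L i) = i := by
  have hne : L.Nonempty := ⟨i, hi⟩
  have hfm := fmax_spec hne
  have hlt : i < fmax L := lt_of_le_of_ne (hfm.2 i hi) hifm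
  obtain ⟨hp, hn, hlt'⟩ := prv_nxt hi hfm.1 hlt
  exact ⟨hlt', hn, hp⟩

/-- uniqueness: consec arc vs consec arc -/
lemma uniqAA (hP : IsNCP (Finset.Icc 0 ℓ) P) {L L' : Finset ℕ} {i i' x : ℕ}
    (hL : L ∈ P) (hi : i ∈ L) (hifm : i ≠ fmax L)
    (hL' : L' ∈ P) (hi' : i' ∈ L') (hifm' : i' ≠ fmax L')
    (hx : x ∈ ({2 * i + 1, 2 * nxt L i} : Finset ℕ))
    (hx' : x ∈ ({2 * i' + 1, 2 * nxt L' i'} : Finset ℕ)) :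
    L = L' ∧ i = i' := by
  obtain ⟨hlt, hn, hpv⟩ := consec_facts hi hifm
  obtain ⟨hlt', hn', hpv'⟩ := consec_facts hi' hifm'
  simp only [mem_insert, mem_singleton] at hx hx'
  rcases hx with rfl | rfl <;> rcases hx' with h | h
  · have hii : i = i' := by omega
    subst hii
    exact ⟨block_unique hP.1 hL hL' hi hi', rfl⟩
  · omega
  · omega
  · have hjj : nxt L i = nxt L' i' := by omega
    have hLL : L = L' := block_unique hP.1 hL hL' hn (hjj ▸ hn')
    subst hLL
    rw [hjj] at hpv
    rw [hpv'] at hpv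
    exact ⟨rfl, hpv.symm⟩

/-- consec arc vs outer arc : impossible to share a point -/
lemma uniqAB (hP : IsNCP (Finset.Icc 0 ℓ) P) {L L' : Finset ℕ} {i x : ℕ}
    (hL : L ∈ P) (hi : i ∈ L) (hifm : i ≠ fmax L)
    (hL' : L' ∈ P) (h0' : 0 ∉ L')
    (hx : x ∈ ({2 * i + 1, 2 * nxt L i} : Finset ℕ))
    (hx' : x ∈ ({2 * fmin L', 2 * fmax L' + 1} : Finset ℕ)) : False := by
  obtain ⟨hlt, hn, hpv⟩ := consec_facts hi hifm
  have hne' : L'.Nonempty := hP.1.1 L' hL'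
  have hfm' := fmax_spec hne'
  have hfn' := fmin_spec hne'
  simp only [mem_insert, mem_singleton] at hx hx'
  rcases hx with rfl | rfl <;> rcases hx' with h | h
  · omega
  · have : i = fmax L' := by omega
    have hLL : L = L' := block_unique hP.1 hL hL' hi (this ▸ hfm'.1)
    subst hLL
    exact hifm this
  · have : nxt L i = fmin L' := by omega
    have hLL : L = L' := block_unique hP.1 hL hL' hn (this ▸ hfn'.1)
    subst hLL
    have := hfn'.2 i hi
    omega
  · omega

/-- consec arc vs singleton : impossible -/
lemma uniqAC (hP : IsNCP (Finset.Icc 0 ℓ) P) {L : Finset ℕ} {i x : ℕ}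
    (hL : L ∈ P) (hi : i ∈ L) (hifm : i ≠ fmax L)
    (hx : x ∈ ({2 * i + 1, 2 * nxt L i} : Finset ℕ))
    (hx' : x = 2 * fmax (blk P 0) + 1) : False := by
  obtain ⟨hlt, hn, hpv⟩ := consec_facts hi hifm
  obtain ⟨hL0, h00⟩ := L0_mem hP
  have hfm0 := fmax_spec ⟨0, h00⟩
  simp only [mem_insert, mem_singleton] at hx
  rcases hx with rfl | rfl
  · have : i = fmax (blk P 0) := by omega
    have hLL : L = blk P 0 := block_unique hP.1 hL hL0 hi (this ▸ hfm0.1)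
    subst hLL
    exact hifm this
  · omega

/-- outer arc vs outer arc -/
lemma uniqBB (hP : IsNCP (Finset.Icc 0 ℓ) P) {L L' : Finset ℕ} {x : ℕ}
    (hL : L ∈ P) (h0 : 0 ∉ L) (hL' : L' ∈ P) (h0' : 0 ∉ L')
    (hx : x ∈ ({2 * fmin L, 2 * fmax L + 1} : Finset ℕ))
    (hx' : x ∈ ({2 * fmin L', 2 * fmax L' + 1} : Finset ℕ)) : L = L' := by
  have hne : L.Nonempty := hP.1.1 L hL
  have hne' : L'.Nonempty := hP.1.1 L' hL'
  simp only [mem_insert, mem_singleton] at hx hx'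
  rcases hx with rfl | rfl <;> rcases hx' with h | h
  · have : fmin L = fmin L' := by omega
    exact block_unique hP.1 hL hL' (fmin_spec hne).1 (this ▸ (fmin_spec hne').1)
  · omega
  · omega
  · have : fmax L = fmax L' := by omega
    exact block_unique hP.1 hL hL' (fmax_spec hne).1 (this ▸ (fmax_spec hne').1)

/-- outer arc vs singleton : impossible -/
lemma uniqBC (hP : IsNCP (Finset.Icc 0 ℓ) P) {L : Finset ℕ} {x : ℕ}
    (hL : L ∈ P) (h0 : 0 ∉ L)
    (hx : x ∈ ({2 * fmin L, 2 * fmax L + 1} : Finset ℕ))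
    (hx' : x = 2 * fmax (blk P 0) + 1) : False := by
  have hne : L.Nonempty := hP.1.1 L hL
  obtain ⟨hL0, h00⟩ := L0_mem hP
  simp only [mem_insert, mem_singleton] at hx
  rcases hx with rfl | rfl
  · omega
  · have : fmax L = fmax (blk P 0) := by omega
    have hLL : L = blk P 0 :=
      block_unique hP.1 hL hL0 (fmax_spec hne).1 (this ▸ (fmax_spec ⟨0, h00⟩).1)
    subst hLL
    exact h0 h00

lemma psi_unique (hP : IsNCP (Finset.Icc 0 ℓ) P) {M M' : Finset ℕ} {x : ℕ}
    (hM : M ∈ psi P) (hM' : M' ∈ psi P) (hx : x ∈ M) (hx' : x ∈ M') : M = M' := by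
  rcases mem_psi.1 hM with ⟨L, hL, i, hi, hifm, rfl⟩ | ⟨L, hL, h0, rfl⟩ | rfl <;>
    rcases mem_psi.1 hM' with ⟨L', hL', i', hi', hifm', rfl⟩ | ⟨L', hL', h0', rfl⟩ | rfl
  · obtain ⟨h1, h2⟩ := uniqAA hP hL hi hifm hL' hi' hifm' hx hx'
    subst h1; subst h2; rfl
  · exact absurd (uniqAB hP hL hi hifm hL' h0' hx hx') not_false
  · exact absurd (uniqAC hP hL hi hifm hx (by simpa using hx')) not_false
  · exact absurd (uniqAB hP hL' hi' hifm' hL h0 hx' hx) not_false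
  · rw [uniqBB hP hL h0 hL' h0' hx hx']
  · exact absurd (uniqBC hP hL h0 hx (by simpa using hx')) not_false
  · exact absurd (uniqAC hP hL' hi' hifm' hx' (by simpa using hx)) not_false
  · exact absurd (uniqBC hP hL' h0' hx' (by simpa using hx)) not_false
  · rfl

lemma psi_cover (hP : IsNCP (Finset.Icc 0 ℓ) P) {x : ℕ} (hx : x ∈ Zset ℓ) :
    ∃ M ∈ psi P, x ∈ M := by
  simp only [Zset, mem_Icc] at hx
  rcases Nat.even_or_odd x with ⟨k, hk⟩ | ⟨k, hk⟩
  · -- x = 2k, 1 ≤ k ≤ ℓ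
    have hkb : 1 ≤ k ∧ k ≤ ℓ := by omega
    have hkI : k ∈ Finset.Icc 0 ℓ := by simp only [mem_Icc]; omega
    obtain ⟨hLk, hkL⟩ := blk_mem hP.1 hkI
    set L := blk P k with hLdef
    by_cases hmin : k = fmin L
    · have h0 : 0 ∉ L := by
        intro h0
        have := (fmin_spec ⟨k, hkL⟩).2 0 h0
        omega
      refine ⟨{2 * fmin L, 2 * fmax L + 1}, mem_psi.2 (Or.inr (Or.inl ⟨L, hLk, h0, rfl⟩)), ?_⟩
      simp only [mem_insert]
      left; omega
    · obtain ⟨hnp, hpL, hplt⟩ := nxt_prv hkL hmin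
      have hpfm : prv L k ≠ fmax L := by
        intro hc
        have := (fmax_spec ⟨k, hkL⟩).2 k hkL
        omega
      refine ⟨{2 * prv L k + 1, 2 * nxt L (prv L k)},
        mem_psi.2 (Or.inl ⟨L, hLk, prv L k, hpL, hpfm, rfl⟩), ?_⟩
      rw [hnp]
      simp only [mem_insert, mem_singleton]
      right; omega
  · -- x = 2k+1, 0 ≤ k ≤ ℓ
    have hkb : k ≤ ℓ := by omega
    have hkI : k ∈ Finset.Icc 0 ℓ := by simp only [mem_Icc]; omega
    obtain ⟨hLk, hkL⟩ := blk_mem hP.1 hkI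
    set L := blk P k with hLdef
    by_cases hfm : k = fmax L
    · by_cases h0 : 0 ∈ L
      · have : L = blk P 0 := block_unique hP.1 hLk (L0_mem hP).1 h0 (L0_mem hP).2
        refine ⟨{2 * fmax (blk P 0) + 1}, mem_psi.2 (Or.inr (Or.inr rfl)), ?_⟩
        simp only [mem_singleton]
        rw [← this, ← hfm]
        omega
      · refine ⟨{2 * fmin L, 2 * fmax L + 1}, mem_psi.2 (Or.inr (Or.inl ⟨L, hLk, h0, rfl⟩)), ?_⟩
        simp only [mem_insert, mem_singleton]
        right; omega
    · refine ⟨{2 * k + 1, 2 * nxt L k}, mem_psi.2 (Or.inl ⟨L, hLk, k, hkL, hfm, rfl⟩), ?_⟩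
      simp only [mem_insert]
      left; omega

lemma psi_subset_Z (hP : IsNCP (Finset.Icc 0 ℓ) P) {M : Finset ℕ} (hM : M ∈ psi P) :
    M ⊆ Zset ℓ := by
  intro x hx
  simp only [Zset, mem_Icc]
  rcases mem_psi.1 hM with ⟨L, hL, i, hi, hifm, rfl⟩ | ⟨L, hL, h0, rfl⟩ | rfl
  · obtain ⟨hlt, hn, _⟩ := consec_facts hi hifm
    have h1 := ncp_bound hP hL hi
    have h2 := ncp_bound hP hL hn
    simp only [mem_insert, mem_singleton] at hx
    rcases hx with rfl | rfl <;> omega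
  · have hne : L.Nonempty := hP.1.1 L hL
    have h1 := ncp_bound hP hL (fmin_spec hne).1
    have h2 := ncp_bound hP hL (fmax_spec hne).1
    have h3 : fmin L ≠ 0 := fun hc => h0 (hc ▸ (fmin_spec hne).1)
    simp only [mem_insert, mem_singleton] at hx
    rcases hx with rfl | rfl <;> omega
  · obtain ⟨hL0, h00⟩ := L0_mem hP
    have h2 := ncp_bound hP hL0 (fmax_spec ⟨0, h00⟩).1
    simp only [mem_singleton] at hx
    subst hx; omega

lemma psi_partition (hP : IsNCP (Finset.Icc 0 ℓ) P) :
    IsPartitionOf (Zset ℓ) (psi P) := by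
  refine ⟨?_, fun M hM => psi_subset_Z hP hM, ?_⟩
  · intro M hM
    rcases mem_psi.1 hM with ⟨L, hL, i, hi, hifm, rfl⟩ | ⟨L, hL, h0, rfl⟩ | rfl
    · exact ⟨2 * i + 1, by simp⟩
    · exact ⟨2 * fmin L, by simp⟩
    · exact ⟨2 * fmax (blk P 0) + 1, by simp⟩
  · intro x hx
    obtain ⟨M, hM, hxM⟩ := psi_cover hP hx
    refine ⟨M, ⟨hM, hxM⟩, ?_⟩
    rintro M' ⟨hM', hxM'⟩
    exact psi_unique hP hM' hM hxM' hxM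

end PsiTL

section PsiTL2

variable {ℓ : ℕ} {P : Finset (Finset ℕ)}

lemma blocks_disj {B : Finset ℕ} {Q : Finset (Finset ℕ)} (hQ : IsPartitionOf B Q)
    {L L' : Finset ℕ} (hL : L ∈ Q) (hL' : L' ∈ Q) (hne : L ≠ L') {x : ℕ}
    (hx : x ∈ L) (hx' : x ∈ L') : False :=
  hne (block_unique hQ hL hL' hx hx')

/-- trichotomy abbreviation -/
def TRI (a b c d : ℕ) : Prop :=
  Finset.Icc a b ∩ Finset.Icc c d = ∅ ∨
  Finset.Icc a b ⊆ Finset.Icc c d ∨ Finset.Icc c d ⊆ Finset.Icc a b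

lemma tri_symm {a b c d : ℕ} (h : TRI a b c d) : TRI c d a b := by
  unfold TRI at *
  rcases h with h | h | h
  · left; rw [inter_comm]; exact h
  · right; right; exact h
  · right; left; exact h

lemma triAA (hP : IsNCP (Finset.Icc 0 ℓ) P) {L L' : Finset ℕ} {i i' : ℕ}
    (hL : L ∈ P) (hi : i ∈ L) (hifm : i ≠ fmax L)
    (hL' : L' ∈ P) (hi' : i' ∈ L') (hifm' : i' ≠ fmax L')
    (hMne : ({2 * i + 1, 2 * nxt L i} : Finset ℕ) ≠ ({2 * i' + 1, 2 * nxt L' i'} : Finset ℕ)) :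
    TRI (2 * i + 1) (2 * nxt L i) (2 * i' + 1) (2 * nxt L' i') := by
  obtain ⟨hlt, hn, hpv⟩ := consec_facts hi hifm
  obtain ⟨hlt', hn', hpv'⟩ := consec_facts hi' hifm'
  rcases eq_or_ne L L' with rfl | hLL
  · have hii : i ≠ i' := fun hc => hMne (by rw [hc])
    rcases lt_or_gt_of_ne hii with hc | hc
    · have hle : nxt L i ≤ i' := (nxt_spec hi' hc).2.2 i' hi' hc
      exact Or.inl (icc_inter_empty (by omega))
    · have hle : nxt L i' ≤ i := (nxt_spec hi hc).2.2 i hi hc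
      exact Or.inl (icc_inter_empty (by omega))
  · rcases hP.2 L hL L' hL' hLL i hi (nxt L i) hn i' hi' (nxt L' i') hn'
        (by omega) (by omega) with h | h | h
    · rw [icc_inter_empty_iff (by omega) (by omega)] at h
      exact Or.inl (icc_inter_empty (by omega))
    · rw [icc_subset_iff (by omega)] at h
      exact Or.inr (Or.inl (by rw [icc_subset_iff (by omega)]; omega))
    · rw [icc_subset_iff (by omega)] at h
      exact Or.inr (Or.inr (by rw [icc_subset_iff (by omega)]; omega))

lemma triAB (hP : IsNCP (Finset.Icc 0 ℓ) P) {L L' : Finset ℕ} {i : ℕ}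
    (hL : L ∈ P) (hi : i ∈ L) (hifm : i ≠ fmax L)
    (hL' : L' ∈ P) (h0' : 0 ∉ L') :
    TRI (2 * i + 1) (2 * nxt L i) (2 * fmin L') (2 * fmax L' + 1) := by
  obtain ⟨hlt, hn, hpv⟩ := consec_facts hi hifm
  have hne' : L'.Nonempty := hP.1.1 L' hL'
  have hfm' := fmax_spec hne'
  have hfn' := fmin_spec hne'
  have hmm' : fmin L' ≤ fmax L' := hfn'.2 _ hfm'.1
  rcases eq_or_ne L L' with rfl | hLL
  · have h1 := hfn'.2 i hi
    have h2 := hfm'.2 _ hn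
    exact Or.inr (Or.inl (by rw [icc_subset_iff (by omega)]; omega))
  · rcases hP.2 L hL L' hL' hLL i hi (nxt L i) hn (fmin L') hfn'.1 (fmax L') hfm'.1
        (by omega) (by omega) with h | h | h
    · rw [icc_inter_empty_iff (by omega) (by omega)] at h
      exact Or.inl (icc_inter_empty (by omega))
    · rw [icc_subset_iff (by omega)] at h
      exact Or.inr (Or.inl (by rw [icc_subset_iff (by omega)]; omega))
    · rw [icc_subset_iff (by omega)] at h
      have hs1 : i ≠ fmin L' := fun hc => blocks_disj hP.1 hL hL' hLL hi (hc ▸ hfn'.1)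
      have hs2 : nxt L i ≠ fmax L' := fun hc => blocks_disj hP.1 hL hL' hLL hn (hc ▸ hfm'.1)
      exact Or.inr (Or.inr (by rw [icc_subset_iff (by omega)]; omega))

lemma triBB (hP : IsNCP (Finset.Icc 0 ℓ) P) {L L' : Finset ℕ}
    (hL : L ∈ P) (h0 : 0 ∉ L) (hL' : L' ∈ P) (h0' : 0 ∉ L') (hLL : L ≠ L') :
    TRI (2 * fmin L) (2 * fmax L + 1) (2 * fmin L') (2 * fmax L' + 1) := by
  have hne : L.Nonempty := hP.1.1 L hL
  have hne' : L'.Nonempty := hP.1.1 L' hL'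
  have hfm := fmax_spec hne
  have hfn := fmin_spec hne
  have hfm' := fmax_spec hne'
  have hfn' := fmin_spec hne'
  have hmm : fmin L ≤ fmax L := hfn.2 _ hfm.1
  have hmm' : fmin L' ≤ fmax L' := hfn'.2 _ hfm'.1
  rcases hP.2 L hL L' hL' hLL (fmin L) hfn.1 (fmax L) hfm.1 (fmin L') hfn'.1 (fmax L') hfm'.1
      (by omega) (by omega) with h | h | h
  · rw [icc_inter_empty_iff (by omega) (by omega)] at h
    exact Or.inl (icc_inter_empty (by omega))
  · rw [icc_subset_iff (by omega)] at h
    exact Or.inr (Or.inl (by rw [icc_subset_iff (by omega)]; omega))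
  · rw [icc_subset_iff (by omega)] at h
    exact Or.inr (Or.inr (by rw [icc_subset_iff (by omega)]; omega))

end PsiTL2

section PsiTL3

variable {ℓ : ℕ} {P : Finset (Finset ℕ)}

lemma sing_ne_pair {d u v : ℕ} (huv : u < v) :
    ({u, v} : Finset ℕ) ≠ ({d} : Finset ℕ) := by
  intro h
  have h1 : u ∈ ({d} : Finset ℕ) := by rw [← h]; simp
  have h2 : v ∈ ({d} : Finset ℕ) := by rw [← h]; simp
  simp only [mem_singleton] at h1 h2
  omega

lemma pair_sorted_eq {a b c d : ℕ} (hab : a < b) (hcd : c < d)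
    (h : ({a, b} : Finset ℕ) = ({c, d} : Finset ℕ)) : a = c ∧ b = d := by
  have h1 : a ∈ ({c, d} : Finset ℕ) := by rw [← h]; simp
  have h2 : b ∈ ({c, d} : Finset ℕ) := by rw [← h]; simp
  have h3 : c ∈ ({a, b} : Finset ℕ) := by rw [h]; simp
  simp only [mem_insert, mem_singleton] at h1 h2 h3
  omega

/-- full-interval trichotomy for distinct psi blocks that are pairs -/
lemma psi_tri (hP : IsNCP (Finset.Icc 0 ℓ) P) {M M' : Finset ℕ}
    (hM : M ∈ psi P) (hM' : M' ∈ psi P) (hne : M ≠ M')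
    {u v u' v' : ℕ} (huv : u < v) (huv' : u' < v')
    (hMuv : M = ({u, v} : Finset ℕ)) (hMuv' : M' = ({u', v'} : Finset ℕ)) :
    TRI u v u' v' := by
  rcases mem_psi.1 hM with ⟨L, hL, i, hi, hifm, hform⟩ | ⟨L, hL, h0, hform⟩ | hform <;>
    rcases mem_psi.1 hM' with ⟨L', hL', i', hi', hifm', hform'⟩ | ⟨L', hL', h0', hform'⟩ | hform'
  · obtain ⟨hlt, hn, _⟩ := consec_facts hi hifm
    obtain ⟨hlt', hn', _⟩ := consec_facts hi' hifm'
    obtain ⟨e1, e2⟩ := pair_sorted_eq huv (by omega) (hMuv ▸ hform)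
    obtain ⟨e1', e2'⟩ := pair_sorted_eq huv' (by omega) (hMuv' ▸ hform')
    subst e1; subst e2; subst e1'; subst e2'
    exact triAA hP hL hi hifm hL' hi' hifm' (by rw [← hform, ← hform']; exact hne)
  · obtain ⟨hlt, hn, _⟩ := consec_facts hi hifm
    have hne' : L'.Nonempty := hP.1.1 L' hL'
    have hmm' : fmin L' ≤ fmax L' := (fmin_spec hne').2 _ (fmax_spec hne').1
    obtain ⟨e1, e2⟩ := pair_sorted_eq huv (by omega) (hMuv ▸ hform)
    obtain ⟨e1', e2'⟩ := pair_sorted_eq huv' (by omega) (hMuv' ▸ hform')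
    subst e1; subst e2; subst e1'; subst e2'
    exact triAB hP hL hi hifm hL' h0'
  · exact absurd (hMuv'.symm.trans hform') (sing_ne_pair huv')
  · obtain ⟨hlt', hn', _⟩ := consec_facts hi' hifm'
    have hneL : L.Nonempty := hP.1.1 L hL
    have hmm : fmin L ≤ fmax L := (fmin_spec hneL).2 _ (fmax_spec hneL).1
    obtain ⟨e1, e2⟩ := pair_sorted_eq huv (by omega) (hMuv ▸ hform)
    obtain ⟨e1', e2'⟩ := pair_sorted_eq huv' (by omega) (hMuv' ▸ hform')
    subst e1; subst e2; subst e1'; subst e2'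
    exact tri_symm (triAB hP hL' hi' hifm' hL h0)
  · have hneL : L.Nonempty := hP.1.1 L hL
    have hmm : fmin L ≤ fmax L := (fmin_spec hneL).2 _ (fmax_spec hneL).1
    have hne' : L'.Nonempty := hP.1.1 L' hL'
    have hmm' : fmin L' ≤ fmax L' := (fmin_spec hne').2 _ (fmax_spec hne').1
    obtain ⟨e1, e2⟩ := pair_sorted_eq huv (by omega) (hMuv ▸ hform)
    obtain ⟨e1', e2'⟩ := pair_sorted_eq huv' (by omega) (hMuv' ▸ hform')
    subst e1; subst e2; subst e1'; subst e2'
    have hLL : L ≠ L' := by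
      intro hc; subst hc; exact hne (hform.trans hform'.symm)
    exact triBB hP hL h0 hL' h0' hLL
  · exact absurd (hMuv'.symm.trans hform') (sing_ne_pair huv')
  · exact absurd (hMuv.symm.trans hform) (sing_ne_pair huv)
  · exact absurd (hMuv.symm.trans hform) (sing_ne_pair huv)
  · exact absurd (hMuv.symm.trans hform) (sing_ne_pair huv)

lemma psi_noncrossing (hP : IsNCP (Finset.Icc 0 ℓ) P) : PairwiseNoncrossing (psi P) := by
  intro M hM M' hM' hne a ha b hb c hc d hd hab hcd
  rcases eq_or_lt_of_le hab with rfl | hab'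
  · rcases point_nc a c d with h | h
    · exact Or.inl h
    · exact Or.inr (Or.inl h)
  rcases eq_or_lt_of_le hcd with rfl | hcd'
  · by_cases hcm : c ∈ Finset.Icc a b
    · simp only [mem_Icc] at hcm
      exact Or.inr (Or.inr (by intro y hy; simp only [mem_Icc] at hy ⊢; omega))
    · left
      ext y
      simp only [mem_inter, mem_Icc, notMem_empty, iff_false]
      simp only [mem_Icc] at hcm
      omega
  -- both genuine pairs: identify M = {a, b}, M' = {c, d}
  have hMab : M = ({a, b} : Finset ℕ) := by
    rcases mem_psi.1 hM with ⟨L, hL, i, hi, hifm, rfl⟩ | ⟨L, hL, h0, rfl⟩ | rfl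
    · obtain ⟨hlt, hn, _⟩ := consec_facts hi hifm
      simp only [mem_insert, mem_singleton] at ha hb
      have : a = 2 * i + 1 ∧ b = 2 * nxt L i := by omega
      rw [this.1, this.2]
    · have hneL : L.Nonempty := hP.1.1 L hL
      have hmm : fmin L ≤ fmax L := (fmin_spec hneL).2 _ (fmax_spec hneL).1
      simp only [mem_insert, mem_singleton] at ha hb
      have : a = 2 * fmin L ∧ b = 2 * fmax L + 1 := by omega
      rw [this.1, this.2]
    · simp only [mem_singleton] at ha hb
      omega
  have hMcd : M' = ({c, d} : Finset ℕ) := by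
    rcases mem_psi.1 hM' with ⟨L, hL, i, hi, hifm, rfl⟩ | ⟨L, hL, h0, rfl⟩ | rfl
    · obtain ⟨hlt, hn, _⟩ := consec_facts hi hifm
      simp only [mem_insert, mem_singleton] at hc hd
      have : c = 2 * i + 1 ∧ d = 2 * nxt L i := by omega
      rw [this.1, this.2]
    · have hneL : L.Nonempty := hP.1.1 L hL
      have hmm : fmin L ≤ fmax L := (fmin_spec hneL).2 _ (fmax_spec hneL).1
      simp only [mem_insert, mem_singleton] at hc hd
      have : c = 2 * fmin L ∧ d = 2 * fmax L + 1 := by omega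
      rw [this.1, this.2]
    · simp only [mem_singleton] at hc hd
      omega
  exact psi_tri hP hM hM' hne hab' hcd' hMab hMcd

lemma psi_sing (hP : IsNCP (Finset.Icc 0 ℓ) P) {M : Finset ℕ} (hM : M ∈ psi P)
    (hMne : M ≠ ({2 * fmax (blk P 0) + 1} : Finset ℕ)) :
    ∃ a b, a < b ∧ M = ({a, b} : Finset ℕ) ∧
      (b < 2 * fmax (blk P 0) + 1 ∨ 2 * fmax (blk P 0) + 1 < a) := by
  obtain ⟨hL0, h00⟩ := L0_mem hP
  have hfm0 := fmax_spec ⟨0, h00⟩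
  rcases mem_psi.1 hM with ⟨L, hL, i, hi, hifm, rfl⟩ | ⟨L, hL, h0, rfl⟩ | rfl
  · obtain ⟨hlt, hn, _⟩ := consec_facts hi hifm
    refine ⟨2 * i + 1, 2 * nxt L i, by omega, rfl, ?_⟩
    rcases eq_or_ne L (blk P 0) with rfl | hLL
    · left
      have := hfm0.2 _ hn
      omega
    · rcases hP.2 L hL (blk P 0) hL0 hLL i hi (nxt L i) hn 0 h00 (fmax (blk P 0)) hfm0.1
          (by omega) (by omega) with h | h | h
      · rw [icc_inter_empty_iff (by omega) (by omega)] at h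
        right; omega
      · rw [icc_subset_iff (by omega)] at h
        left; omega
      · rw [icc_subset_iff (by omega)] at h
        exfalso
        have : i = 0 := by omega
        exact blocks_disj hP.1 hL hL0 hLL (this ▸ hi) h00
  · have hneL : L.Nonempty := hP.1.1 L hL
    have hfm := fmax_spec hneL
    have hfn := fmin_spec hneL
    have hmm : fmin L ≤ fmax L := hfn.2 _ hfm.1
    have hLL : L ≠ blk P 0 := fun hc => h0 (hc ▸ h00)
    refine ⟨2 * fmin L, 2 * fmax L + 1, by omega, rfl, ?_⟩
    rcases hP.2 L hL (blk P 0) hL0 hLL (fmin L) hfn.1 (fmax L) hfm.1 0 h00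
        (fmax (blk P 0)) hfm0.1 (by omega) (by omega) with h | h | h
    · rw [icc_inter_empty_iff (by omega) (by omega)] at h
      right; omega
    · rw [icc_subset_iff (by omega)] at h
      have : fmax L ≠ fmax (blk P 0) := fun hc =>
        blocks_disj hP.1 hL hL0 hLL hfm.1 (hc ▸ hfm0.1)
      left; omega
    · rw [icc_subset_iff (by omega)] at h
      exfalso
      have : fmin L = 0 := by omega
      exact h0 (this ▸ hfn.1)
  · exact absurd rfl hMne

lemma psi_isTL (hP : IsNCP (Finset.Icc 0 ℓ) P) : IsTLPattern (Zset ℓ) (psi P) := by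
  refine ⟨psi_partition hP, psi_noncrossing hP, ({2 * fmax (blk P 0) + 1} : Finset ℕ),
    mem_psi.2 (Or.inr (Or.inr rfl)), 2 * fmax (blk P 0) + 1, ⟨fmax (blk P 0), by omega⟩,
    rfl, fun M hM hMne => psi_sing hP hM hMne⟩

end PsiTL3

/-! ### Injectivity of ψ -/

section PsiInj

variable {ℓ : ℕ} {P P' : Finset (Finset ℕ)}

lemma psi_consec_blk (hP : IsNCP (Finset.Icc 0 ℓ) P) (hP' : IsNCP (Finset.Icc 0 ℓ) P')
    (hpsi : psi P = psi P') {L : Finset ℕ} {i : ℕ}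
    (hL : L ∈ P) (hi : i ∈ L) (hifm : i ≠ fmax L) :
    nxt L i ∈ blk P' i ∧ i ∈ blk P' i := by
  obtain ⟨hlt, hn, _⟩ := consec_facts hi hifm
  have hM : ({2 * i + 1, 2 * nxt L i} : Finset ℕ) ∈ psi P' := by
    rw [← hpsi]
    exact mem_psi.2 (Or.inl ⟨L, hL, i, hi, hifm, rfl⟩)
  rcases mem_psi.1 hM with ⟨L', hL', i', hi', hifm', hform⟩ | ⟨L', hL', h0', hform⟩ | hform
  · obtain ⟨hlt', hn', _⟩ := consec_facts hi' hifm'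
    obtain ⟨e1, e2⟩ := pair_sorted_eq (by omega) (by omega) hform
    have hii : i = i' := by omega
    subst hii
    have hjj : nxt L i = nxt L' i := by omega
    have hb : blk P' i = L' := blk_eq hP'.1 hL' hi'
    rw [hb, hjj]
    exact ⟨hn', hi'⟩
  · obtain ⟨e1, e2⟩ := pair_sorted_eq (by omega)
      (by
        have hne' : L'.Nonempty := hP'.1.1 L' hL'
        have := (fmin_spec hne').2 _ (fmax_spec hne').1
        omega) hform
    omega
  · exact absurd hform (sing_ne_pair (by omega))

lemma psi_chain (hP : IsNCP (Finset.Icc 0 ℓ) P) (hP' : IsNCP (Finset.Icc 0 ℓ) P')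
    (hpsi : psi P = psi P') :
    ∀ y, ∀ L ∈ P, y ∈ L → y ∈ blk P' (fmin L) := by
  intro y
  induction y using Nat.strong_induction_on with
  | _ y ih =>
    intro L hL hyL
    have hneL : L.Nonempty := ⟨y, hyL⟩
    have hfminI : fmin L ∈ Finset.Icc 0 ℓ := hP.1.2.1 L hL (fmin_spec hneL).1
    rcases eq_or_ne y (fmin L) with rfl | hne
    · exact (blk_mem hP'.1 hfminI).2
    · obtain ⟨hnp, hpL, hplt⟩ := nxt_prv hyL hne
      have hpfm : prv L y ≠ fmax L := by
        have := (fmax_spec hneL).2 y hyL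
        omega
      obtain ⟨hstep, hself⟩ := psi_consec_blk hP hP' hpsi hL hpL hpfm
      rw [hnp] at hstep
      have hih : prv L y ∈ blk P' (fmin L) := ih _ hplt L hL hpL
      have hprvI : prv L y ∈ Finset.Icc 0 ℓ := hP.1.2.1 L hL hpL
      have heq : blk P' (prv L y) = blk P' (fmin L) :=
        block_unique hP'.1 (blk_mem hP'.1 hprvI).1 (blk_mem hP'.1 hfminI).1 hself hih
      rw [← heq]
      exact hstep

lemma psi_inj_sub (hP : IsNCP (Finset.Icc 0 ℓ) P) (hP' : IsNCP (Finset.Icc 0 ℓ) P')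
    (hpsi : psi P = psi P') : P ⊆ P' := by
  intro L hL
  have hneL : L.Nonempty := hP.1.1 L hL
  have hfminI : fmin L ∈ Finset.Icc 0 ℓ := hP.1.2.1 L hL (fmin_spec hneL).1
  set L'' := blk P' (fmin L) with hL''
  have hL''P : L'' ∈ P' := (blk_mem hP'.1 hfminI).1
  have hsub1 : L ⊆ L'' := fun y hy => psi_chain hP hP' hpsi y L hL hy
  have hne'' : L''.Nonempty := hP'.1.1 _ hL''P
  have hfmin''I : fmin L'' ∈ Finset.Icc 0 ℓ := hP'.1.2.1 _ hL''P (fmin_spec hne'').1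
  have hsub2 : L'' ⊆ blk P (fmin L'') := fun y hy =>
    psi_chain hP' hP hpsi.symm y L'' hL''P hy
  -- blk P (fmin L'') = L
  have hfmem : fmin L ∈ blk P (fmin L'') := hsub2 (hsub1 (fmin_spec hneL).1)
  have heq : blk P (fmin L'') = L :=
    block_unique hP.1 (blk_mem hP.1 hfmin''I).1 hL hfmem
      (by exact (fmin_spec hneL).1)
  rw [heq] at hsub2
  rw [subset_antisymm hsub1 hsub2]
  exact hL''P

lemma psi_inj (hP : IsNCP (Finset.Icc 0 ℓ) P) (hP' : IsNCP (Finset.Icc 0 ℓ) P')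
    (hpsi : psi P = psi P') : P = P' :=
  subset_antisymm (psi_inj_sub hP hP' hpsi) (psi_inj_sub hP' hP hpsi.symm)

end PsiInj


/-- There is a bijection `Φ` from the TL patterns of `{1, …, 2ℓ+1}` to the NCPs of
`{0, 1, …, ℓ}` such that, for a TL pattern `σ` with odd-below-even blocks
`{2a_j+1, 2b_j}`, the blocks of `Φ σ` not containing `0` are exactly the sets
`carve ℓ σ (a_j, b_j)` and the block containing `0` is the complement of their
union in `{0, …, ℓ}`. -/
theorem stmt7 (ℓ : ℕ) (hℓ : 1 ≤ ℓ) :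
    ∃ Φ : Finset (Finset ℕ) → Finset (Finset ℕ),
      Set.BijOn Φ {σ | IsTLPattern (Finset.Icc 1 (2 * ℓ + 1)) σ}
        {P | IsNCP (Finset.Icc 0 ℓ) P} ∧
      ∀ σ, IsTLPattern (Finset.Icc 1 (2 * ℓ + 1)) σ →
        (Φ σ).filter (fun L => 0 ∉ L) = (oddEvenPairs ℓ σ).image (carve ℓ σ) ∧
        ∀ L ∈ Φ σ, 0 ∈ L →
          L = Finset.Icc 0 ℓ \ (oddEvenPairs ℓ σ).biUnion (carve ℓ σ) := by
  classical
  set T : Set (Finset (Finset ℕ)) := {σ | IsTLPattern (Finset.Icc 1 (2 * ℓ + 1)) σ} with hT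
  set N : Set (Finset (Finset ℕ)) := {P | IsNCP (Finset.Icc 0 ℓ) P} with hN
  have hZeq : Zset ℓ = Finset.Icc 1 (2 * ℓ + 1) := rfl
  have hTfin : T.Finite := by
    apply Set.Finite.subset (Finset.finite_toSet ((Zset ℓ).powerset.powerset))
    intro σ hσ
    simp only [hT, Set.mem_setOf_eq] at hσ
    simp only [Finset.coe_powerset, Set.mem_preimage, Set.mem_powerset_iff]
    intro B hB
    simp only [Finset.coe_powerset, Set.mem_preimage, Set.mem_powerset_iff]
    rw [← hZeq] at hσ
    exact fun x hx => hσ.1.2.1 B hB hx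
  have hNfin : N.Finite := by
    apply Set.Finite.subset (Finset.finite_toSet ((Finset.Icc 0 ℓ).powerset.powerset))
    intro P hP
    simp only [hN, Set.mem_setOf_eq] at hP
    simp only [Finset.coe_powerset, Set.mem_preimage, Set.mem_powerset_iff]
    intro B hB
    simp only [Finset.coe_powerset, Set.mem_preimage, Set.mem_powerset_iff]
    exact fun x hx => hP.1.2.1 B hB hx
  have hmaps : Set.MapsTo (Phi ℓ) T N := by
    intro σ hσ
    rw [hT, Set.mem_setOf_eq, ← hZeq] at hσ
    rw [hN, Set.mem_setOf_eq]
    exact Phi_isNCP hσ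
  have hinj : Set.InjOn (Phi ℓ) T := by
    intro σ hσ σ' hσ' h
    rw [hT, Set.mem_setOf_eq, ← hZeq] at hσ hσ'
    exact Phi_injOn hσ hσ' h
  have hmaps' : Set.MapsTo psi N T := by
    intro P hP
    rw [hN, Set.mem_setOf_eq] at hP
    rw [hT, Set.mem_setOf_eq, ← hZeq]
    exact psi_isTL hP
  have hinj' : Set.InjOn psi N := by
    intro P hP P' hP' h
    rw [hN, Set.mem_setOf_eq] at hP hP'
    exact psi_inj hP hP' h
  have le1 : T.ncard ≤ N.ncard := Set.ncard_le_ncard_of_injOn (Phi ℓ) hmaps hinj hNfin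
  have le2 : N.ncard ≤ T.ncard := Set.ncard_le_ncard_of_injOn psi hmaps' hinj' hTfin
  have himg : Phi ℓ '' T ⊆ N := hmaps.image_subset
  have hcardimg : N.ncard ≤ (Phi ℓ '' T).ncard := by
    rw [Set.ncard_image_of_injOn hinj]
    omega
  have heqimg : Phi ℓ '' T = N := Set.eq_of_subset_of_ncard_le himg hcardimg hNfin
  have hsurj : Set.SurjOn (Phi ℓ) T N := by
    rw [Set.SurjOn, heqimg]
  refine ⟨Phi ℓ, ⟨hmaps, hinj, hsurj⟩, ?_⟩
  intro σ hσ
  rw [← hZeq] at hσ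
  refine ⟨Phi_filter hσ, fun L hL h0 => ?_⟩
  rw [Phi_zero_block hσ hL h0]
  rfl
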